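/- arXiv:1209.2390 — 6 statements merged into one kernel-verified Lean document; each statement's English description precedes it below -/
import Mathlib

section
/- Let J : ℂⁿ → ℂⁿ be multiplication by i. Then J(L₁) = L₂ and J(L₂) = L₁. -/
open Complex

/-- In `ℂⁿ`, let `J` be multiplication by `i`, `R_H` coordinatewise
conjugation, and `R_D(z)_j = i · conj(z_j)`.  Given `H₁,…,Hₙ` in the fixed-point set of
`R_H` and `D₁,…,Dₙ` in the fixed-point set of `R_D`, let `L₁` be the additive subgroup
generated by the `Hᵢ` and the `R_H(Dᵢ)`, and `L₂` the additive subgroup generated by the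
`Dᵢ` and the `R_D(Hᵢ)`.  Then `J(L₁) = L₂` and `J(L₂) = L₁`. -/
theorem J_swaps_lattices (n : ℕ) (Hv Dv : Fin n → (Fin n → ℂ))
    (hH : ∀ i j, (Hv i j).im = 0)
    (hD : ∀ i j, (Dv i j).im = (Dv i j).re)
    (L₁ L₂ : AddSubgroup (Fin n → ℂ))
    (hL₁ : L₁ = AddSubgroup.closure
      (Set.range Hv ∪ Set.range fun i => fun j => (starRingEnd ℂ) (Dv i j)))
    (hL₂ : L₂ = AddSubgroup.closure
      (Set.range Dv ∪ Set.range fun i => fun j => Complex.I * (starRingEnd ℂ) (Hv i j))) :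
    (fun z : Fin n → ℂ => fun j => Complex.I * z j) '' (L₁ : Set (Fin n → ℂ))
        = (L₂ : Set (Fin n → ℂ)) ∧
    (fun z : Fin n → ℂ => fun j => Complex.I * z j) '' (L₂ : Set (Fin n → ℂ))
        = (L₁ : Set (Fin n → ℂ)) := by
  set J : (Fin n → ℂ) →+ (Fin n → ℂ) :=
    { toFun := fun z j => Complex.I * z j
      map_zero' := by funext j; simp
      map_add' := by intro x y; funext j; simp [mul_add] } with hJ
  have key : (fun z : Fin n → ℂ => fun j => Complex.I * z j) '' (L₁ : Set (Fin n → ℂ))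
      = (L₂ : Set (Fin n → ℂ)) := by
    have himg : (fun z : Fin n → ℂ => fun j => Complex.I * z j) '' (L₁ : Set (Fin n → ℂ))
        = ((L₁.map J : AddSubgroup (Fin n → ℂ)) : Set (Fin n → ℂ)) := rfl
    rw [himg, hL₁, hL₂, AddMonoidHom.map_closure]
    rw [Set.image_union, ← Set.range_comp, ← Set.range_comp]
    have h1 : (⇑J ∘ Hv) = (fun i => fun j => Complex.I * (starRingEnd ℂ) (Hv i j)) := by
      funext i j
      simp only [hJ, Function.comp_apply, AddMonoidHom.coe_mk, ZeroHom.coe_mk]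
      congr 1
      exact (Complex.conj_eq_iff_im.mpr (hH i j)).symm
    have h2 : (⇑J ∘ fun i => fun j => (starRingEnd ℂ) (Dv i j)) = Dv := by
      funext i j
      simp only [hJ, Function.comp_apply, AddMonoidHom.coe_mk, ZeroHom.coe_mk]
      apply Complex.ext <;>
        simp [Complex.mul_re, Complex.mul_im, hD i j]
    rw [h1, h2, Set.union_comm]
  refine ⟨key, ?_⟩
  rw [← key]
  have hJJ : ∀ w : Fin n → ℂ,
      (fun j => Complex.I * (fun j => Complex.I * w j) j) = -w := by
    intro w; funext j
    simp [← mul_assoc, Complex.I_mul_I]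
  ext x
  simp only [Set.mem_image, SetLike.mem_coe]
  constructor
  · rintro ⟨y, ⟨w, hw, rfl⟩, rfl⟩
    rw [hJJ w]
    exact neg_mem hw
  · intro hx
    refine ⟨fun j => Complex.I * (-x) j, ⟨-x, neg_mem hx, rfl⟩, ?_⟩
    rw [hJJ (-x), neg_neg]
end

section
/- Suppose {H₁,…,Hₙ} is an ℝ-basis of H and {D₁,…,Dₙ} is an ℝ-basis of D. Let F₁ = {Σⱼ tⱼHⱼ + Σⱼ uⱼDⱼ : tⱼ, uⱼ ∈ [−1/2, 1/2]} be the parallelotope centered at the origin whose sides are spanned by H₁,…,Hₙ,D₁,…,Dₙ. Then F₁ is a fundamental domain for both L₁ and L₂: for L = L₁ and for L = L₂, every point p ∈ ℂⁿ satisfies p + V ∈ F₁ for some V ∈ L, and for distinct V, V′ ∈ L the interiors of F₁ + V and F₁ + V′ are disjoint. -/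
open Complex Set

private lemma repr_zero_of_span {n : ℕ} {σ : Type*} [Fintype σ]
    (B : Module.Basis σ ℝ (Fin n → ℂ)) (v : Fin n → (Fin n → ℂ)) (k : σ)
    (hk : ∀ i, B.repr (v i) k = 0)
    {w : Fin n → ℂ} (hw : w ∈ Submodule.span ℝ (Set.range v)) : B.repr w k = 0 := by
  obtain ⟨c, rfl⟩ := (Submodule.mem_span_range_iff_exists_fun ℝ).mp hw
  simp [map_sum, Finsupp.finset_sum_apply, hk]

private lemma mem_closure_iff_comb {n : ℕ} (g : Fin n ⊕ Fin n → (Fin n → ℂ)) (V : Fin n → ℂ) :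
    V ∈ AddSubgroup.closure (Set.range g) ↔
      ∃ c : Fin n ⊕ Fin n → ℤ, ∑ k, ((c k : ℝ)) • g k = V := by
  rw [← Submodule.span_int_eq_addSubgroupClosure, Submodule.mem_toAddSubgroup,
    Submodule.mem_span_range_iff_exists_fun]
  constructor
  · rintro ⟨c, rfl⟩
    exact ⟨c, by simp [Int.cast_smul_eq_zsmul]⟩
  · rintro ⟨c, rfl⟩
    exact ⟨c, by simp [Int.cast_smul_eq_zsmul]⟩

private lemma interior_F {n : ℕ} (B : Module.Basis (Fin n ⊕ Fin n) ℝ (Fin n → ℂ))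
    (F : Set (Fin n → ℂ))
    (hF : F = {z | ∀ k, B.repr z k ∈ Set.Icc (-(1/2) : ℝ) (1/2)}) :
    interior F = {z | ∀ k, B.repr z k ∈ Set.Ioo (-(1/2) : ℝ) (1/2)} := by
  let e : (Fin n → ℂ) ≃L[ℝ] ((Fin n ⊕ Fin n) → ℝ) := B.equivFun.toContinuousLinearEquiv
  have hFe : F = e ⁻¹' (Set.univ.pi fun _ => Set.Icc (-(1/2) : ℝ) (1/2)) := by
    rw [hF]; ext z
    simp only [Set.mem_preimage, Set.mem_pi, Set.mem_univ, true_implies, Set.mem_setOf_eq]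
    exact ⟨fun h k => h k, fun h k => h k⟩
  have h2 := (e.toHomeomorph.preimage_interior
    (Set.univ.pi fun _ => Set.Icc (-(1/2) : ℝ) (1/2)))
  simp only [ContinuousLinearEquiv.coe_toHomeomorph] at h2
  rw [hFe, ← h2, interior_pi_set Set.finite_univ]
  ext z
  simp only [Set.mem_preimage, Set.mem_pi, Set.mem_univ, true_implies, Set.mem_setOf_eq,
    Function.comp, interior_Icc]
  exact ⟨fun h k => h k, fun h k => h k⟩

private lemma fund_dom {n : ℕ} (B : Module.Basis (Fin n ⊕ Fin n) ℝ (Fin n → ℂ))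
    (g : Fin n ⊕ Fin n → (Fin n → ℂ))
    (hgl : ∀ i, g (Sum.inl i) = B (Sum.inl i))
    (hgr : ∀ i j, B.repr (g (Sum.inr i)) (Sum.inr j) = if i = j then (-1 : ℝ) else 0)
    (F : Set (Fin n → ℂ))
    (hF : F = {z | ∀ k, B.repr z k ∈ Set.Icc (-(1/2) : ℝ) (1/2)}) :
    (∀ p, ∃ V ∈ AddSubgroup.closure (Set.range g), p + V ∈ F) ∧
    (∀ V ∈ AddSubgroup.closure (Set.range g), ∀ V' ∈ AddSubgroup.closure (Set.range g),
      V ≠ V' → Disjoint (interior ((fun p => V + p) '' F))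
        (interior ((fun p => V' + p) '' F))) := by
  classical
  have hrl : ∀ i j, B.repr (g (Sum.inl i)) (Sum.inl j) = if i = j then (1 : ℝ) else 0 := by
    intro i j; rw [hgl, Module.Basis.repr_self_apply]; simp
  have hrl0 : ∀ i j, B.repr (g (Sum.inl i)) (Sum.inr j) = 0 := by
    intro i j; rw [hgl, Module.Basis.repr_self_apply]; simp
  constructor
  · -- existence
    intro p
    set b : Fin n → ℝ := fun i => (round (B.repr p (Sum.inr i)) : ℝ) with hb
    set q : Fin n → ℂ := p + ∑ i, b i • g (Sum.inr i) with hq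
    set a : Fin n → ℝ := fun i => (round (B.repr q (Sum.inl i)) : ℝ) with ha
    refine ⟨∑ i, b i • g (Sum.inr i) - ∑ i, a i • g (Sum.inl i), ?_, ?_⟩
    · apply sub_mem <;> apply AddSubgroup.sum_mem <;> intro i _
      · rw [hb, Int.cast_smul_eq_zsmul]
        exact AddSubgroup.zsmul_mem _ (AddSubgroup.subset_closure (Set.mem_range_self _)) _
      · rw [ha, Int.cast_smul_eq_zsmul]
        exact AddSubgroup.zsmul_mem _ (AddSubgroup.subset_closure (Set.mem_range_self _)) _
    · have hqr : ∀ j, B.repr q (Sum.inr j) ∈ Set.Icc (-(1/2) : ℝ) (1/2) := by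
        intro j
        have : B.repr q (Sum.inr j)
            = B.repr p (Sum.inr j) - (round (B.repr p (Sum.inr j)) : ℝ) := by
          rw [hq]
          simp only [map_add, map_sum, map_smul, Finsupp.add_apply, Finsupp.finset_sum_apply,
            Finsupp.smul_apply, hgr, smul_eq_mul, mul_ite, mul_neg_one, mul_zero]
          rw [Finset.sum_ite_eq' Finset.univ j (fun x => -b x)]
          simp [hb, sub_eq_add_neg]
        rw [this]
        have h := abs_sub_round (B.repr p (Sum.inr j))
        rw [abs_le] at h
        exact ⟨by linarith [h.1], by linarith [h.2]⟩
      have key : p + (∑ i, b i • g (Sum.inr i) - ∑ i, a i • g (Sum.inl i))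
          = q - ∑ i, a i • g (Sum.inl i) := by rw [hq]; abel
      rw [hF, key]
      intro k
      match k with
      | Sum.inr j =>
        have : B.repr (q - ∑ i, a i • g (Sum.inl i)) (Sum.inr j) = B.repr q (Sum.inr j) := by
          simp only [map_sub, map_sum, map_smul, Finsupp.sub_apply, Finsupp.finset_sum_apply,
            Finsupp.smul_apply, hrl0, smul_eq_mul, mul_zero, Finset.sum_const_zero, sub_zero]
        rw [this]; exact hqr j
      | Sum.inl j =>
        have : B.repr (q - ∑ i, a i • g (Sum.inl i)) (Sum.inl j)
            = B.repr q (Sum.inl j) - (round (B.repr q (Sum.inl j)) : ℝ) := by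
          simp only [map_sub, map_sum, map_smul, Finsupp.sub_apply, Finsupp.finset_sum_apply,
            Finsupp.smul_apply, hrl, smul_eq_mul, mul_ite, mul_one, mul_zero]
          rw [Finset.sum_ite_eq' Finset.univ j a]
          simp [ha]
        rw [this]
        have h := abs_sub_round (B.repr q (Sum.inl j))
        rw [abs_le] at h
        exact ⟨by linarith [h.1], by linarith [h.2]⟩
  · -- disjointness
    intro V hV V' hV' hne
    rw [Set.disjoint_left]
    intro x hx hx'
    have him : ∀ W : Fin n → ℂ, interior ((fun p => W + p) '' F)
        = (fun p => W + p) '' interior F := by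
      intro W
      exact ((Homeomorph.addLeft W).image_interior F).symm
    rw [him] at hx hx'
    obtain ⟨y, hy, hyx⟩ := hx
    obtain ⟨y', hy', hyx'⟩ := hx'
    rw [interior_F B F hF] at hy hy'
    -- W := V' - V = y - y'
    have hW : V' - V = y - y' := by
      have h : V + y = V' + y' := hyx.trans hyx'.symm
      rw [sub_eq_sub_iff_add_eq_add]
      rw [add_comm y V]
      exact h.symm
    obtain ⟨c, hc⟩ := (mem_closure_iff_comb g (V' - V)).mp (sub_mem hV' hV)
    have hcr : ∀ j, B.repr (V' - V) (Sum.inr j) = -(c (Sum.inr j) : ℝ) := by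
      intro j
      rw [← hc]
      simp only [map_sum, map_smul, Finsupp.finset_sum_apply, Finsupp.smul_apply,
        smul_eq_mul]
      rw [Fintype.sum_sum_type]
      simp only [hrl0, hgr, mul_zero, Finset.sum_const_zero, zero_add, mul_ite, mul_neg_one,
        mul_zero]
      rw [Finset.sum_ite_eq' Finset.univ j (fun x => -(c (Sum.inr x) : ℝ))]
      simp
    have hbound : ∀ k, B.repr (V' - V) k ∈ Set.Ioo (-1 : ℝ) 1 := by
      intro k
      rw [hW, map_sub, Finsupp.sub_apply]
      have h1 := (hy k); have h2 := (hy' k)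
      constructor <;> [nlinarith [h1.1, h1.2, h2.1, h2.2]; nlinarith [h1.1, h1.2, h2.1, h2.2]]
    have hcr0 : ∀ j, c (Sum.inr j) = 0 := by
      intro j
      have h := hbound (Sum.inr j)
      rw [hcr j] at h
      have h1 : (-1 : ℝ) < -(c (Sum.inr j) : ℝ) := h.1
      have h2 : (-(c (Sum.inr j) : ℝ)) < 1 := h.2
      have : |(c (Sum.inr j) : ℝ)| < 1 := by rw [abs_lt]; constructor <;> linarith
      rw [← Int.cast_abs] at this
      exact_mod_cast Int.abs_lt_one_iff.mp (by exact_mod_cast this)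
    have hcl0 : ∀ j, c (Sum.inl j) = 0 := by
      intro j
      have hrepr : B.repr (V' - V) (Sum.inl j) = (c (Sum.inl j) : ℝ) := by
        rw [← hc]
        simp only [map_sum, map_smul, Finsupp.finset_sum_apply, Finsupp.smul_apply,
          smul_eq_mul]
        rw [Fintype.sum_sum_type]
        simp only [hrl, hcr0, Int.cast_zero, zero_mul, Finset.sum_const_zero, add_zero,
          mul_ite, mul_one, mul_zero]
        rw [Finset.sum_ite_eq' Finset.univ j (fun x => (c (Sum.inl x) : ℝ))]
        simp
      have h := hbound (Sum.inl j)
      rw [hrepr] at h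
      have : |(c (Sum.inl j) : ℝ)| < 1 := by rw [abs_lt]; exact ⟨h.1, h.2⟩
      rw [← Int.cast_abs] at this
      exact_mod_cast Int.abs_lt_one_iff.mp (by exact_mod_cast this)
    apply hne
    have : V' - V = 0 := by
      rw [← hc, Fintype.sum_sum_type]
      simp [hcl0, hcr0]
    have := sub_eq_zero.mp this
    exact this.symm

/-- In `ℂⁿ` (regarded as a real vector space), suppose `H₁,…,Hₙ` is an
`ℝ`-basis of the totally real subspace `H = {z : Im z_j = 0 ∀j}` and `D₁,…,Dₙ` is an
`ℝ`-basis of `D = {z : Im z_j = Re z_j ∀j}`.  Let `F₁` be the parallelotope centered at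
the origin with sides spanned by `H₁,…,Hₙ,D₁,…,Dₙ`, let `L₁` be the additive subgroup
generated by `H₁,…,Hₙ, R_H(D₁),…,R_H(Dₙ)` and `L₂` the one generated by
`D₁,…,Dₙ, R_D(H₁),…,R_D(Hₙ)`.  Then `F₁` is a fundamental domain for both `L₁` and `L₂`:
every point can be translated into `F₁` by a lattice vector, and distinct lattice
translates of `F₁` have disjoint interiors. -/
theorem F1_fundamental_domain (n : ℕ) (Hv Dv : Fin n → (Fin n → ℂ))
    (hHmem : ∀ i j, (Hv i j).im = 0)
    (hDmem : ∀ i j, (Dv i j).im = (Dv i j).re)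
    (hHind : LinearIndependent ℝ Hv)
    (hHspan : (Submodule.span ℝ (Set.range Hv) : Set (Fin n → ℂ))
      = {z : Fin n → ℂ | ∀ j, (z j).im = 0})
    (hDind : LinearIndependent ℝ Dv)
    (hDspan : (Submodule.span ℝ (Set.range Dv) : Set (Fin n → ℂ))
      = {z : Fin n → ℂ | ∀ j, (z j).im = (z j).re})
    (F₁ : Set (Fin n → ℂ))
    (hF₁ : F₁ = {p : Fin n → ℂ | ∃ t u : Fin n → ℝ,
      (∀ j, t j ∈ Set.Icc (-(1/2) : ℝ) (1/2)) ∧ (∀ j, u j ∈ Set.Icc (-(1/2) : ℝ) (1/2)) ∧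
      p = ∑ j, t j • Hv j + ∑ j, u j • Dv j})
    (L₁ L₂ : AddSubgroup (Fin n → ℂ))
    (hL₁ : L₁ = AddSubgroup.closure
      (Set.range Hv ∪ Set.range fun i => fun j => (starRingEnd ℂ) (Dv i j)))
    (hL₂ : L₂ = AddSubgroup.closure
      (Set.range Dv ∪ Set.range fun i => fun j => Complex.I * (starRingEnd ℂ) (Hv i j))) :
    ∀ L : AddSubgroup (Fin n → ℂ), (L = L₁ ∨ L = L₂) →
      (∀ p : Fin n → ℂ, ∃ V ∈ L, p + V ∈ F₁) ∧
      (∀ V ∈ L, ∀ V' ∈ L, V ≠ V' →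
        Disjoint (interior ((fun p => V + p) '' F₁)) (interior ((fun p => V' + p) '' F₁))) := by
  classical
  -- membership in spans
  have hHmem' : ∀ w : Fin n → ℂ, (∀ j, (w j).im = 0) → w ∈ Submodule.span ℝ (Set.range Hv) := by
    intro w hw
    rw [← SetLike.mem_coe, hHspan]
    exact hw
  have hDmem' : ∀ w : Fin n → ℂ, (∀ j, (w j).im = (w j).re) →
      w ∈ Submodule.span ℝ (Set.range Dv) := by
    intro w hw
    rw [← SetLike.mem_coe, hDspan]
    exact hw
  -- the basis
  have hdisj : Disjoint (Submodule.span ℝ (Set.range Hv)) (Submodule.span ℝ (Set.range Dv)) := by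
    rw [Submodule.disjoint_def]
    intro z hz1 hz2
    rw [← SetLike.mem_coe, hHspan] at hz1
    rw [← SetLike.mem_coe, hDspan] at hz2
    funext j
    have h1 := hz1 j
    have h2 := hz2 j
    show z j = (0 : Fin n → ℂ) j
    exact Complex.ext (by simp [← h2, h1]) (by simp [h1])
  have hspanTop : ⊤ ≤ Submodule.span ℝ (Set.range (Sum.elim Hv Dv)) := by
    rw [Set.Sum.elim_range, Submodule.span_union]
    intro z _
    refine Submodule.mem_sup.mpr
      ⟨(fun j => (((z j).re - (z j).im : ℝ) : ℂ)), hHmem' _ (by intro j; simp),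
       (fun j => ((z j).im : ℂ) * (1 + Complex.I)), hDmem' _ (by intro j; simp), ?_⟩
    funext j
    apply Complex.ext <;> simp [Pi.add_apply]
  set B₀ : Module.Basis (Fin n ⊕ Fin n) ℝ (Fin n → ℂ) :=
    Module.Basis.mk (hHind.sum_type hDind hdisj) hspanTop with hB₀def
  have hB₀ : ∀ k, B₀ k = Sum.elim Hv Dv k := fun k => Module.Basis.mk_apply _ _ k
  have hB₀l : ∀ i, B₀ (Sum.inl i) = Hv i := fun i => hB₀ (Sum.inl i)
  have hB₀r : ∀ i, B₀ (Sum.inr i) = Dv i := fun i => hB₀ (Sum.inr i)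
  -- F₁ in coordinates
  have hFset : F₁ = {z | ∀ k, B₀.repr z k ∈ Set.Icc (-(1/2) : ℝ) (1/2)} := by
    rw [hF₁]
    ext z
    constructor
    · rintro ⟨t, u, ht, hu, rfl⟩ k
      have hsum : (∑ j, t j • Hv j + ∑ j, u j • Dv j) = ∑ k, Sum.elim t u k • B₀ k := by
        rw [Fintype.sum_sum_type]
        simp [hB₀l, hB₀r]
      rw [hsum, B₀.repr_sum_self]
      cases k with
      | inl i => exact ht i
      | inr i => exact hu i
    · intro hz
      refine ⟨fun i => B₀.repr z (Sum.inl i), fun i => B₀.repr z (Sum.inr i),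
        fun j => hz _, fun j => hz _, ?_⟩
      conv_lhs => rw [← B₀.sum_repr z]
      rw [Fintype.sum_sum_type]
      simp [hB₀l, hB₀r]
  -- helper: repr of inl basis vectors at inr indices vanish, etc.
  have hreprH0 : ∀ i j, B₀.repr (Hv i) (Sum.inr j) = 0 := by
    intro i j
    rw [← hB₀l, Module.Basis.repr_self_apply]
    simp
  have hreprD0 : ∀ i j, B₀.repr (Dv i) (Sum.inl j) = 0 := by
    intro i j
    rw [← hB₀r, Module.Basis.repr_self_apply]
    simp
  intro L hL
  rcases hL with rfl | rfl
  · -- L = L₁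
    set g : Fin n ⊕ Fin n → (Fin n → ℂ) :=
      Sum.elim Hv (fun i => fun j => (starRingEnd ℂ) (Dv i j)) with hg
    have hrange : (Set.range Hv ∪ Set.range fun i j => (starRingEnd ℂ) (Dv i j))
        = Set.range g := (Set.Sum.elim_range _ _).symm
    rw [hL₁, hrange]
    refine fund_dom B₀ g (fun i => (hB₀l i).symm) ?_ F₁ hFset
    intro i j
    have hdec : g (Sum.inr i) = (fun j => ((2 * (Dv i j).re : ℝ) : ℂ)) - Dv i := by
      funext j'
      show (starRingEnd ℂ) (Dv i j') = _
      apply Complex.ext <;> simp [Pi.sub_apply] <;> ring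
    rw [hdec, map_sub, Finsupp.sub_apply]
    have h1 : B₀.repr (fun j' => ((2 * (Dv i j').re : ℝ) : ℂ)) (Sum.inr j) = 0 :=
      repr_zero_of_span B₀ Hv _ (fun i' => hreprH0 i' j) (hHmem' _ (by intro j'; simp))
    rw [h1, ← hB₀r i, Module.Basis.repr_self_apply]
    by_cases h : i = j <;> simp [h]
  · -- L = L₂
    set e := Equiv.sumComm (Fin n) (Fin n) with he
    set B₂ := B₀.reindex e with hB₂def
    have hB₂l : ∀ i, B₂ (Sum.inl i) = Dv i := by
      intro i
      rw [hB₂def, Module.Basis.reindex_apply]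
      exact hB₀r i
    have hB₂repr : ∀ (z : Fin n → ℂ) k, B₂.repr z k = B₀.repr z (e.symm k) :=
      fun z k => Module.Basis.repr_reindex_apply _ _ _ _
    have hFset₂ : F₁ = {z | ∀ k, B₂.repr z k ∈ Set.Icc (-(1/2) : ℝ) (1/2)} := by
      rw [hFset]
      ext z
      constructor
      · intro h k
        rw [hB₂repr]
        exact h _
      · intro h k
        have h' := h (e k)
        rw [hB₂repr] at h'
        simpa using h'
    set g : Fin n ⊕ Fin n → (Fin n → ℂ) :=
      Sum.elim Dv (fun i => fun j => Complex.I * (starRingEnd ℂ) (Hv i j)) with hg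
    have hrange : (Set.range Dv ∪ Set.range fun i j => Complex.I * (starRingEnd ℂ) (Hv i j))
        = Set.range g := (Set.Sum.elim_range _ _).symm
    rw [hL₂, hrange]
    refine fund_dom B₂ g (fun i => (hB₂l i).symm) ?_ F₁ hFset₂
    intro i j
    rw [hB₂repr]
    have hesymm : e.symm (Sum.inr j) = Sum.inl j := rfl
    rw [hesymm]
    have hdec : g (Sum.inr i) = (fun j' => ((Hv i j').re : ℂ) * (1 + Complex.I)) - Hv i := by
      funext j'
      show Complex.I * (starRingEnd ℂ) (Hv i j') = _
      have him := hHmem i j'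
      apply Complex.ext <;> simp [Pi.sub_apply, him] <;> ring
    rw [hdec, map_sub, Finsupp.sub_apply]
    have h1 : B₀.repr (fun j' => ((Hv i j').re : ℂ) * (1 + Complex.I)) (Sum.inl j) = 0 :=
      repr_zero_of_span B₀ Dv _ (fun i' => hreprD0 i' j) (hDmem' _ (by intro j'; simp))
    rw [h1, ← hB₀l i, Module.Basis.repr_self_apply]
    by_cases h : i = j <;> simp [h]
end

section
/- If s > 0 is irrational, then L₁(s) ∩ L₂(s) = {0}. -/
lemma int_eq_int_mul_irrational {s : ℝ} (hirr : Irrational s) (a b : ℤ)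
    (hab : (a : ℝ) = b * s) : a = 0 ∧ b = 0 := by
  by_cases hb : b = 0
  · subst hb; simp at hab; exact ⟨by exact_mod_cast hab, rfl⟩
  · exfalso
    have hbR : (b : ℝ) ≠ 0 := Int.cast_ne_zero.mpr hb
    have : s = ((a / b : ℚ) : ℝ) := by
      push_cast
      field_simp
      linarith
    exact Rat.not_irrational _ (this ▸ hirr)

/-- For irrational `s > 0`, the lattices `L₁(s)` (generated by `(2,0)`
and `(2s,−2s)`) and `L₂(s)` (generated by `(0,2)` and `(2s,2s)`) intersect only in `0`. -/
theorem lattices_intersect_trivially (s : ℝ) (hs : 0 < s) (hirr : Irrational s) :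
    (AddSubgroup.closure {((2 : ℝ), (0 : ℝ)), ((2*s : ℝ), (-(2*s) : ℝ))} : Set (ℝ × ℝ)) ∩
      (AddSubgroup.closure {((0 : ℝ), (2 : ℝ)), ((2*s : ℝ), (2*s : ℝ))} : Set (ℝ × ℝ))
      = {0} := by
  ext x
  simp only [Set.mem_inter_iff, Set.mem_singleton_iff, SetLike.mem_coe,
    AddSubgroup.mem_closure_pair]
  constructor
  · rintro ⟨⟨m, n, h1⟩, ⟨p, q, h2⟩⟩
    rw [← h2] at h1
    obtain ⟨h1a, h1b⟩ := Prod.ext_iff.mp h1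
    simp only [Prod.smul_fst, Prod.smul_snd, Prod.fst_add, Prod.snd_add, Prod.fst_mul, Prod.snd_mul, zsmul_eq_mul, smul_eq_mul, Prod.fst_intCast, Prod.snd_intCast] at h1a h1b
    -- h1a : m*2 + n*(2*s) = p*0 + q*(2*s)
    have e1 : ((m : ℝ)) = ((q - n : ℤ) : ℝ) * s := by push_cast; nlinarith [h1a]
    obtain ⟨hm, hqn⟩ := int_eq_int_mul_irrational hirr m (q - n) e1
    have hqn' : (q : ℝ) = n := by
      have := sub_eq_zero.mp hqn
      exact_mod_cast congrArg (Int.cast : ℤ → ℝ) this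
    have e2 : ((p : ℝ)) = ((-2 * n : ℤ) : ℝ) * s := by push_cast; nlinarith [h1b, hqn']
    obtain ⟨hp, hn2⟩ := int_eq_int_mul_irrational hirr p (-2 * n) e2
    have hn : n = 0 := by omega
    have hq : q = 0 := by omega
    rw [← h2, hp, hq]
    simp
  · rintro rfl
    exact ⟨⟨0, 0, by simp⟩, ⟨0, 0, by simp⟩⟩
end

section
/- For every s ∈ (0,1) and every p ∈ Xₛ at which fₛ is defined, fₛ is also defined at −p and fₛ(−p) = −fₛ(p). That is, fₛ commutes with the rotation ι(x,y) = (−x,−y). -/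
open Set

noncomputable section OctaPET

/-- Rotation by `π/2` about the origin in `ℝ²`. -/
def Jrot (p : ℝ × ℝ) : ℝ × ℝ := (-p.2, p.1)

/-- The closed parallelogram `F₁(s)` centered at the origin, spanned by `(2,0)` and `(2s,2s)`. -/
def F1 (s : ℝ) : Set (ℝ × ℝ) :=
  {p | ∃ a b : ℝ, a ∈ Icc (-(1/2) : ℝ) (1/2) ∧ b ∈ Icc (-(1/2) : ℝ) (1/2) ∧
    p = a • ((2 : ℝ), (0 : ℝ)) + b • ((2*s : ℝ), (2*s : ℝ))}

/-- `F₂(s) = J(F₁(s))`. -/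
def F2 (s : ℝ) : Set (ℝ × ℝ) := Jrot '' F1 s

/-- The lattice `L₁(s)`, generated by `(2,0)` and `(2s,−2s)`. -/
def L1 (s : ℝ) : AddSubgroup (ℝ × ℝ) :=
  AddSubgroup.closure {((2 : ℝ), (0 : ℝ)), ((2*s : ℝ), (-(2*s) : ℝ))}

/-- The lattice `L₂(s)`, generated by `(0,2)` and `(2s,2s)`. -/
def L2 (s : ℝ) : AddSubgroup (ℝ × ℝ) :=
  AddSubgroup.closure {((0 : ℝ), (2 : ℝ)), ((2*s : ℝ), (2*s : ℝ))}

/-- The partial map `f′ₛ` as a relation: `step s p q` holds iff `f′ₛ` is defined at `p`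
with value `q`.  For `p ∈ F_j(s)`, `f′ₛ(p) = p + V` where `V` is the *unique* vector of
`L_{3−j}(s)` with `p + V ∈ F_{3−j}(s)`. -/
def step (s : ℝ) (p q : ℝ × ℝ) : Prop :=
  (p ∈ F1 s ∧ (∃! V, V ∈ L2 s ∧ p + V ∈ F2 s) ∧ q - p ∈ L2 s ∧ q ∈ F2 s) ∨
  (p ∈ F2 s ∧ (∃! V, V ∈ L1 s ∧ p + V ∈ F1 s) ∧ q - p ∈ L1 s ∧ q ∈ F1 s)

/-- The map `fₛ = (f′ₛ)²`, as a relation: `fRel s p q` holds iff `fₛ` is defined at `p`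
with value `q`. -/
def fRel (s : ℝ) (p q : ℝ × ℝ) : Prop := ∃ r, step s p r ∧ step s r q

end OctaPET


lemma neg_mem_F1 {s : ℝ} {p : ℝ × ℝ} (hp : p ∈ F1 s) : -p ∈ F1 s := by
  obtain ⟨a, b, ha, hb, rfl⟩ := hp
  exact ⟨-a, -b, ⟨by linarith [ha.2], by linarith [ha.1]⟩,
    ⟨by linarith [hb.2], by linarith [hb.1]⟩, by simp [neg_add, neg_smul, add_comm]⟩

lemma neg_mem_F2 {s : ℝ} {p : ℝ × ℝ} (hp : p ∈ F2 s) : -p ∈ F2 s := by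
  obtain ⟨x, hx, rfl⟩ := hp
  exact ⟨-x, neg_mem_F1 hx, by simp [Jrot, Prod.ext_iff]⟩

lemma exu_neg {L : AddSubgroup (ℝ × ℝ)} {F : Set (ℝ × ℝ)}
    (hF : ∀ {x : ℝ × ℝ}, x ∈ F → -x ∈ F) {p : ℝ × ℝ}
    (h : ∃! V, V ∈ L ∧ p + V ∈ F) : ∃! V, V ∈ L ∧ -p + V ∈ F := by
  obtain ⟨V, ⟨hV, hpV⟩, huniq⟩ := h
  refine ⟨-V, ⟨neg_mem hV, by simpa [neg_add, add_comm] using hF hpV⟩, ?_⟩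
  rintro W ⟨hW, hpW⟩
  have := huniq (-W) ⟨neg_mem hW, by simpa [neg_add, add_comm] using hF hpW⟩
  simpa [neg_eq_iff_eq_neg] using this

lemma step_neg {s : ℝ} {p q : ℝ × ℝ} (h : step s p q) : step s (-p) (-q) := by
  rcases h with ⟨h1, h2, h3, h4⟩ | ⟨h1, h2, h3, h4⟩
  · exact Or.inl ⟨neg_mem_F1 h1, exu_neg (fun hx => neg_mem_F2 hx) h2,
      by simpa [neg_sub, ← sub_eq_neg_add] using neg_mem h3, neg_mem_F2 h4⟩
  · exact Or.inr ⟨neg_mem_F2 h1, exu_neg (fun hx => neg_mem_F1 hx) h2,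
      by simpa [neg_sub, ← sub_eq_neg_add] using neg_mem h3, neg_mem_F1 h4⟩

/-- **Rotation Lemma.** For `s ∈ (0,1)`, `fₛ` commutes with the rotation
`ι(x,y) = (−x,−y)`: whenever `fₛ` is defined at `p ∈ Xₛ` with value `q`, it is also
defined at `−p` with value `−q`. -/
theorem f_commutes_with_rotation (s : ℝ) (hs : s ∈ Set.Ioo (0 : ℝ) 1)
    (p q : ℝ × ℝ) (hp : p ∈ F1 s) (hpq : fRel s p q) :
    fRel s (-p) (-q) := by
  obtain ⟨r, h1, h2⟩ := hpq
  exact ⟨-r, step_neg h1, step_neg h2⟩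
end

section
/- (Stability Lemma) Let s ∈ (0,1) be irrational and let p ∈ Xₛ be a periodic point of fₛ of period n (all iterates of fₛ are defined on p and fₛⁿ(p) = p). For i = 0,…,n−1 put p_i = fₛⁱ(p), and let V_i ∈ L₂(s) and W_i ∈ L₁(s) be the unique lattice vectors with f′ₛ(p_i) = p_i + V_i and f′ₛ(p_i + V_i) = p_i + V_i + W_i = p_{i+1}. Then Σ_{i=0}^{n−1} V_i = 0 and Σ_{i=0}^{n−1} W_i = 0; in particular the arithmetic graph of p is a closed polygon. -/
open Set

lemma mem_closure_pair {a b x : ℝ × ℝ}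
    (hx : x ∈ AddSubgroup.closure ({a, b} : Set (ℝ × ℝ))) :
    ∃ m k : ℤ, x = m • a + k • b := by
  induction hx using AddSubgroup.closure_induction with
  | mem y hy =>
    rcases hy with h | h
    · exact ⟨1, 0, by simp [h]⟩
    · exact ⟨0, 1, by simp [Set.mem_singleton_iff.mp h]⟩
  | zero => exact ⟨0, 0, by simp⟩
  | add x y _ _ hx hy =>
    obtain ⟨m1, k1, h1⟩ := hx
    obtain ⟨m2, k2, h2⟩ := hy
    exact ⟨m1 + m2, k1 + k2, by rw [h1, h2, add_zsmul, add_zsmul]; abel⟩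
  | neg x _ hx =>
    obtain ⟨m, k, h⟩ := hx
    exact ⟨-m, -k, by rw [h, neg_zsmul, neg_zsmul, neg_add]⟩

/-- **Stability Lemma.** Let `s ∈ (0,1)` be irrational and let `p ∈ Xₛ` be a
periodic point of `fₛ` of period `n`, with orbit `p_i = fₛⁱ(p)` and displacement vectors
`V_i ∈ L₂(s)`, `W_i ∈ L₁(s)` satisfying `f′ₛ(p_i) = p_i + V_i` and
`f′ₛ(p_i + V_i) = p_i + V_i + W_i = p_{i+1}`.  Then `Σ V_i = 0` and `Σ W_i = 0`. -/
theorem stability_lemma (s : ℝ) (hs : s ∈ Set.Ioo (0 : ℝ) 1) (hirr : Irrational s)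
    (p : ℝ × ℝ) (hp : p ∈ F1 s) (n : ℕ) (hn : 1 ≤ n)
    (u v w : ℕ → ℝ × ℝ)
    (hu0 : u 0 = p) (hun : u n = p)
    (hv : ∀ i < n, v i ∈ L2 s) (hw : ∀ i < n, w i ∈ L1 s)
    (hstep1 : ∀ i < n, step s (u i) (u i + v i))
    (hstep2 : ∀ i < n, step s (u i + v i) (u i + v i + w i))
    (hnext : ∀ i < n, u (i + 1) = u i + v i + w i) :
    ∑ i ∈ Finset.range n, v i = 0 ∧ ∑ i ∈ Finset.range n, w i = 0 := by
  have hsum : ∑ i ∈ Finset.range n, (v i + w i) = 0 := by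
    have h1 : ∑ i ∈ Finset.range n, (v i + w i)
        = ∑ i ∈ Finset.range n, (u (i + 1) - u i) := by
      refine Finset.sum_congr rfl fun i hi => ?_
      rw [hnext i (Finset.mem_range.mp hi)]; abel
    rw [h1, Finset.sum_range_sub u, hu0, hun, sub_self]
  have hVmem : ∑ i ∈ Finset.range n, v i ∈ L2 s :=
    AddSubgroup.sum_mem _ fun i hi => hv i (Finset.mem_range.mp hi)
  have hWmem : ∑ i ∈ Finset.range n, w i ∈ L1 s :=
    AddSubgroup.sum_mem _ fun i hi => hw i (Finset.mem_range.mp hi)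
  set q := ∑ i ∈ Finset.range n, v i with hqdef
  have hq : q = -(∑ i ∈ Finset.range n, w i) := by
    have := hsum
    rw [Finset.sum_add_distrib] at this
    exact eq_neg_of_add_eq_zero_left this
  have hq1 : q ∈ L1 s := by rw [hq]; exact neg_mem hWmem
  obtain ⟨m, k, h1⟩ := mem_closure_pair hq1
  obtain ⟨a, b, h2⟩ := mem_closure_pair hVmem
  have e11 : q.1 = (m : ℝ) * 2 + (k : ℝ) * (2 * s) := by
    rw [h1]; simp [Prod.fst_add, zsmul_eq_mul]
  have e12 : q.2 = (k : ℝ) * (-(2 * s)) := by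
    rw [h1]; simp [Prod.snd_add, zsmul_eq_mul]
  have e21 : q.1 = (b : ℝ) * (2 * s) := by
    rw [h2]; simp [Prod.fst_add, zsmul_eq_mul]
  have e22 : q.2 = (a : ℝ) * 2 + (b : ℝ) * (2 * s) := by
    rw [h2]; simp [Prod.snd_add, zsmul_eq_mul]
  -- From e11 = e21: m = (b - k) s
  have hm : (m : ℝ) = ((b : ℝ) - (k : ℝ)) * s := by nlinarith [e11, e21]
  have hbk : b = k := by
    by_contra hne
    have hne' : ((b : ℝ) - (k : ℝ)) ≠ 0 := by
      intro h; apply hne; exact_mod_cast sub_eq_zero.mp h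
    apply hirr
    refine ⟨(m : ℚ) / ((b : ℚ) - (k : ℚ)), ?_⟩
    have : s = (m : ℝ) / ((b : ℝ) - (k : ℝ)) := by
      field_simp at hm ⊢; linarith [hm]
    rw [this]; push_cast; ring
  have hm0 : (m : ℝ) = 0 := by rw [hm, hbk]; ring
  -- From e12 = e22 with b = k: a = -2 k s
  have ha : (a : ℝ) = -2 * (k : ℝ) * s := by
    have := e12.symm.trans e22
    rw [hbk] at this
    nlinarith [this]
  have hk0 : k = 0 := by
    by_contra hne
    have hne' : ((k : ℝ)) ≠ 0 := by exact_mod_cast hne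
    apply hirr
    refine ⟨-(a : ℚ) / (2 * (k : ℚ)), ?_⟩
    have : s = -(a : ℝ) / (2 * (k : ℝ)) := by
      field_simp at ha ⊢; linarith [ha]
    rw [this]; push_cast; ring
  have ha0 : a = 0 := by
    have : (a : ℝ) = 0 := by rw [ha, hk0]; push_cast; ring
    exact_mod_cast this
  have hb0 : b = 0 := hbk.trans hk0
  have hq0 : q = 0 := by rw [h2, ha0, hb0]; simp
  refine ⟨hq0, ?_⟩
  have := hq.symm.trans hq0
  simpa [neg_eq_zero] using this
end

section
/- Suppose s ∈ [1/4,1] and s ∉ {1/4, 1/3, 1/2, 1}. Then the system (Xₛ, fₛ) is sharp: for every vector V ∈ ℝ², the set {p ∈ Xₛ : fₛ is defined at p and fₛ(p) = p + V} is a convex subset of ℝ². -/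
open Set

-- ### auxiliary development

section Sharpness

-- ### membership characterizations

lemma mem_F1_iff {s : ℝ} (hs : 0 < s) {p : ℝ × ℝ} :
    p ∈ F1 s ↔ (-s ≤ p.2 ∧ p.2 ≤ s ∧ -1 ≤ p.1 - p.2 ∧ p.1 - p.2 ≤ 1) := by
  constructor
  · rintro ⟨a, b, ⟨ha1, ha2⟩, ⟨hb1, hb2⟩, rfl⟩
    simp only [Prod.smul_mk, smul_eq_mul, Prod.mk_add_mk, Prod.fst, Prod.snd]
    constructor
    · nlinarith
    refine ⟨by nlinarith, by nlinarith, by nlinarith⟩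
  · rintro ⟨h1, h2, h3, h4⟩
    refine ⟨(p.1 - p.2)/2, p.2/(2*s), ⟨by linarith, by linarith⟩,
      ⟨?_, ?_⟩, ?_⟩
    · rw [le_div_iff₀ (by linarith)]
      linarith
    · rw [div_le_iff₀ (by linarith)]
      linarith
    · have : (2:ℝ)*s ≠ 0 := by positivity
      ext <;> simp [smul_eq_mul] <;> field_simp <;> ring

lemma mem_F2_iff {s : ℝ} (hs : 0 < s) {p : ℝ × ℝ} :
    p ∈ F2 s ↔ (-s ≤ p.1 ∧ p.1 ≤ s ∧ -1 ≤ p.1 + p.2 ∧ p.1 + p.2 ≤ 1) := by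
  constructor
  · rintro ⟨q, hq, rfl⟩
    rw [mem_F1_iff hs] at hq
    simp only [Jrot]
    constructor
    · linarith [hq.2.2.2]
    · exact ⟨by linarith [hq.2.2.1], by linarith [hq.1], by linarith [hq.2.1]⟩
  · rintro ⟨h1, h2, h3, h4⟩
    refine ⟨(p.2, -p.1), ?_, by simp [Jrot]⟩
    rw [mem_F1_iff hs]
    refine ⟨by simp; linarith, by simp; linarith, by simp; linarith, by simp; linarith⟩

lemma mem_L2_iff {s : ℝ} {V : ℝ × ℝ} :
    V ∈ L2 s ↔ ∃ m n : ℤ, V = (2*s*m, 2*n + 2*s*m) := by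
  constructor
  · intro hV
    induction hV using AddSubgroup.closure_induction with
    | mem x hx =>
      rcases hx with hx | hx
      · exact ⟨0, 1, by simp [hx]⟩
      · exact ⟨1, 0, by simp at hx; simp [hx]⟩
    | zero => exact ⟨0, 0, by simp; rfl⟩
    | add x y _ _ ihx ihy =>
      obtain ⟨m, n, rfl⟩ := ihx
      obtain ⟨M, N, rfl⟩ := ihy
      exact ⟨m + M, n + N, by push_cast; ext <;> simp <;> ring⟩
    | neg x _ ihx =>
      obtain ⟨m, n, rfl⟩ := ihx
      exact ⟨-m, -n, by push_cast; ext <;> simp <;> ring⟩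
  · rintro ⟨m, n, rfl⟩
    have h1 : ((0:ℝ), (2:ℝ)) ∈ L2 s :=
      AddSubgroup.subset_closure (by simp)
    have h2 : ((2*s : ℝ), (2*s : ℝ)) ∈ L2 s :=
      AddSubgroup.subset_closure (by simp)
    have := AddSubgroup.add_mem _ (AddSubgroup.zsmul_mem _ h2 m) (AddSubgroup.zsmul_mem _ h1 n)
    convert this using 1
    ext <;> simp [smul_eq_mul] <;> ring

lemma mem_L1_iff {s : ℝ} {V : ℝ × ℝ} :
    V ∈ L1 s ↔ ∃ m n : ℤ, V = (2*n + 2*s*m, -(2*s*m)) := by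
  constructor
  · intro hV
    induction hV using AddSubgroup.closure_induction with
    | mem x hx =>
      rcases hx with hx | hx
      · exact ⟨0, 1, by simp [hx]⟩
      · exact ⟨1, 0, by simp at hx; simp [hx]⟩
    | zero => exact ⟨0, 0, by simp; rfl⟩
    | add x y _ _ ihx ihy =>
      obtain ⟨m, n, rfl⟩ := ihx
      obtain ⟨M, N, rfl⟩ := ihy
      exact ⟨m + M, n + N, by push_cast; ext <;> simp <;> ring⟩
    | neg x _ ihx =>
      obtain ⟨m, n, rfl⟩ := ihx
      exact ⟨-m, -n, by push_cast; ext <;> simp <;> ring⟩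
  · rintro ⟨m, n, rfl⟩
    have h1 : ((2:ℝ), (0:ℝ)) ∈ L1 s :=
      AddSubgroup.subset_closure (by simp)
    have h2 : ((2*s : ℝ), (-(2*s) : ℝ)) ∈ L1 s :=
      AddSubgroup.subset_closure (by simp)
    have := AddSubgroup.add_mem _ (AddSubgroup.zsmul_mem _ h2 m) (AddSubgroup.zsmul_mem _ h1 n)
    convert this using 1
    ext <;> simp [smul_eq_mul] <;> ring

-- ### small helpers

lemma int_window (c : ℝ) : ∃ b : ℤ, -1 ≤ c + 2*b ∧ c + 2*b < 1 := by
  refine ⟨⌈(-1 - c)/2⌉, ?_, ?_⟩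
  · have := Int.le_ceil ((-1 - c)/2)
    nlinarith [this]
  · have := Int.ceil_lt_add_one ((-1 - c)/2)
    nlinarith [this]

lemma int_eq_of_cast_lt {k : ℤ} (h1 : (-1 : ℝ) < k) (h2 : (k : ℝ) < 1) : k = 0 := by
  have a1 : (-1 : ℤ) < k := by exact_mod_cast h1
  have a2 : k < 1 := by exact_mod_cast h2
  omega

/-- from `0 < s`, `-2*s < 2*s*t < 2*s` with `t` an integer cast, conclude `t = 0` -/
lemma int_zero_of_mul {s : ℝ} (hs : 0 < s) {k : ℤ}
    (h1 : -(2*s) < 2*s*k) (h2 : 2*s*k < 2*s) : k = 0 := by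
  apply int_eq_of_cast_lt
  · nlinarith
  · nlinarith

-- convex combination helpers
lemma comb_le {a b u v c : ℝ} (ha : 0 ≤ a) (hb : 0 ≤ b) (hab : a + b = 1)
    (hu : u ≤ c) (hv : v ≤ c) : a*u + b*v ≤ c := by
  have h1 : a*u ≤ a*c := mul_le_mul_of_nonneg_left hu ha
  have h2 : b*v ≤ b*c := mul_le_mul_of_nonneg_left hv hb
  have : a*c + b*c = c := by rw [← add_mul, hab, one_mul]
  linarith

lemma comb_ge {a b u v c : ℝ} (ha : 0 ≤ a) (hb : 0 ≤ b) (hab : a + b = 1)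
    (hu : c ≤ u) (hv : c ≤ v) : c ≤ a*u + b*v := by
  have h1 : a*c ≤ a*u := mul_le_mul_of_nonneg_left hu ha
  have h2 : b*c ≤ b*v := mul_le_mul_of_nonneg_left hv hb
  have : a*c + b*c = c := by rw [← add_mul, hab, one_mul]
  linarith

lemma comb_lt_l {a b u v c : ℝ} (ha : 0 < a) (hb : 0 ≤ b) (hab : a + b = 1)
    (hu : u < c) (hv : v ≤ c) : a*u + b*v < c := by
  have h1 : a*u < a*c := (mul_lt_mul_iff_right₀ ha).2 hu
  have h2 : b*v ≤ b*c := mul_le_mul_of_nonneg_left hv hb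
  have : a*c + b*c = c := by rw [← add_mul, hab, one_mul]
  linarith

lemma comb_lt_r {a b u v c : ℝ} (ha : 0 ≤ a) (hb : 0 < b) (hab : a + b = 1)
    (hu : u ≤ c) (hv : v < c) : a*u + b*v < c := by
  have h1 : a*u ≤ a*c := mul_le_mul_of_nonneg_left hu ha
  have h2 : b*v < b*c := (mul_lt_mul_iff_right₀ hb).2 hv
  have : a*c + b*c = c := by rw [← add_mul, hab, one_mul]
  linarith

lemma comb_gt_l {a b u v c : ℝ} (ha : 0 < a) (hb : 0 ≤ b) (hab : a + b = 1)
    (hu : c < u) (hv : c ≤ v) : c < a*u + b*v := by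
  have h1 : a*c < a*u := (mul_lt_mul_iff_right₀ ha).2 hu
  have h2 : b*c ≤ b*v := mul_le_mul_of_nonneg_left hv hb
  have : a*c + b*c = c := by rw [← add_mul, hab, one_mul]
  linarith

lemma comb_gt_r {a b u v c : ℝ} (ha : 0 ≤ a) (hb : 0 < b) (hab : a + b = 1)
    (hu : c ≤ u) (hv : c < v) : c < a*u + b*v := by
  have h1 : a*c ≤ a*u := mul_le_mul_of_nonneg_left hu ha
  have h2 : b*c < b*v := (mul_lt_mul_iff_right₀ hb).2 hv
  have : a*c + b*c = c := by rw [← add_mul, hab, one_mul]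
  linarith

-- ### existence and uniqueness of the translation vector, given open conditions

lemma uniqueA {s : ℝ} (hs : 0 < s) {p : ℝ × ℝ} {m n : ℤ}
    (h1 : -s < p.1 + 2*s*m) (h2 : p.1 + 2*s*m < s)
    (h3 : -1 < p.1 + p.2 + 4*s*m + 2*n) (h4 : p.1 + p.2 + 4*s*m + 2*n < 1) :
    ∃! V, V ∈ L2 s ∧ p + V ∈ F2 s := by
  refine ⟨((2*s*m : ℝ), (2*n + 2*s*m : ℝ)), ⟨mem_L2_iff.2 ⟨m, n, rfl⟩, ?_⟩, ?_⟩
  · rw [mem_F2_iff hs]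
    refine ⟨by simp; linarith, by simp; linarith, by simp; linarith, by simp; linarith⟩
  · rintro W ⟨hWL, hWF⟩
    obtain ⟨a, c, rfl⟩ := mem_L2_iff.1 hWL
    rw [mem_F2_iff hs] at hWF
    simp only [Prod.fst_add, Prod.snd_add] at hWF
    obtain ⟨g1, g2, g3, g4⟩ := hWF
    have ham : a = m := by
      have : a - m = 0 := by
        apply int_zero_of_mul hs (k := a - m) <;> push_cast <;> nlinarith
      omega
    subst ham
    have hcn : c = n := by
      have : c - n = 0 := by
        apply int_eq_of_cast_lt (k := c - n) <;> push_cast <;> nlinarith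
      omega
    subst hcn
    rfl

lemma uniqueB {s : ℝ} (hs : 0 < s) {p : ℝ × ℝ} {m n : ℤ}
    (h1 : -s < p.2 - 2*s*m) (h2 : p.2 - 2*s*m < s)
    (h3 : -1 < p.1 - p.2 + 4*s*m + 2*n) (h4 : p.1 - p.2 + 4*s*m + 2*n < 1) :
    ∃! V, V ∈ L1 s ∧ p + V ∈ F1 s := by
  refine ⟨((2*n + 2*s*m : ℝ), (-(2*s*m) : ℝ)), ⟨mem_L1_iff.2 ⟨m, n, rfl⟩, ?_⟩, ?_⟩
  · rw [mem_F1_iff hs]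
    refine ⟨by simp; linarith, by simp; linarith, by simp; linarith, by simp; linarith⟩
  · rintro W ⟨hWL, hWF⟩
    obtain ⟨a, c, rfl⟩ := mem_L1_iff.1 hWL
    rw [mem_F1_iff hs] at hWF
    simp only [Prod.fst_add, Prod.snd_add] at hWF
    obtain ⟨g1, g2, g3, g4⟩ := hWF
    have ham : a = m := by
      have : a - m = 0 := by
        apply int_zero_of_mul hs (k := a - m) <;> push_cast <;> nlinarith
      omega
    subst ham
    have hcn : c = n := by
      have : c - n = 0 := by
        apply int_eq_of_cast_lt (k := c - n) <;> push_cast <;> nlinarith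
      omega
    subst hcn
    rfl

-- ### extraction: from a step, get explicit data with *open* inequalities

lemma extractA {s : ℝ} (hs : 0 < s) {p r : ℝ × ℝ}
    (hEU : ∃! V, V ∈ L2 s ∧ p + V ∈ F2 s) (hL : r - p ∈ L2 s) (hF : r ∈ F2 s) :
    ∃ m n : ℤ, r = p + ((2*s*m : ℝ), (2*n + 2*s*m : ℝ)) ∧
      -s < p.1 + 2*s*m ∧ p.1 + 2*s*m < s ∧
      -1 < p.1 + p.2 + 4*s*m + 2*n ∧ p.1 + p.2 + 4*s*m + 2*n < 1 := by
  obtain ⟨m, n, hmn⟩ := mem_L2_iff.1 hL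
  have hr : r = p + ((2*s*m : ℝ), (2*n + 2*s*m : ℝ)) := by
    have : r = p + (r - p) := by abel
    rw [this, hmn]
  rw [mem_F2_iff hs] at hF
  rw [hr] at hF
  simp only [Prod.fst_add, Prod.snd_add] at hF
  obtain ⟨g1, g2, g3, g4⟩ := hF
  obtain ⟨W₀, hW₀, hWuniq⟩ := hEU
  refine ⟨m, n, hr, ?_, ?_, ?_, ?_⟩
  · -- if p.1 + 2sm = -s, then m-1 also works, contradiction with uniqueness
    rcases lt_or_ge (-s) (p.1 + 2*s*m) with h | h
    · exact h
    exfalso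
    have heq : p.1 + 2*s*m = -s := le_antisymm (by linarith) (by linarith)
    obtain ⟨b₁, hb1, hb2⟩ := int_window (p.1 + p.2 + 4*s*(m+1))
    have m1 : ((2*s*(m+1) : ℝ), (2*b₁ + 2*s*(m+1) : ℝ)) ∈ L2 s := mem_L2_iff.2 ⟨m+1, b₁, by push_cast; rfl⟩
    have m2 : ((2*s*m : ℝ), (2*n + 2*s*m : ℝ)) ∈ L2 s := mem_L2_iff.2 ⟨m, n, rfl⟩
    have hmem1 : p + ((2*s*(m+1) : ℝ), (2*b₁ + 2*s*(m+1) : ℝ)) ∈ F2 s := by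
      rw [mem_F2_iff hs]
      refine ⟨by simp; push_cast; linarith, by simp; push_cast; linarith,
        by simp; push_cast; linarith, by simp; push_cast; linarith⟩
    have hmem2 : p + ((2*s*m : ℝ), (2*n + 2*s*m : ℝ)) ∈ F2 s := by
      rw [mem_F2_iff hs]
      refine ⟨by simp; linarith, by simp; linarith, by simp; linarith, by simp; linarith⟩
    have e1 := hWuniq _ ⟨m1, hmem1⟩
    have e2 := hWuniq _ ⟨m2, hmem2⟩
    have : (2*s*(m+1) : ℝ) = 2*s*m := by
      have := congrArg Prod.fst (e1.trans e2.symm)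
      simpa using this
    push_cast at this
    nlinarith
  · rcases lt_or_ge (p.1 + 2*s*m) s with h | h
    · exact h
    exfalso
    have heq : p.1 + 2*s*m = s := le_antisymm (by linarith) (by linarith)
    obtain ⟨b₁, hb1, hb2⟩ := int_window (p.1 + p.2 + 4*s*(m-1))
    have m1 : ((2*s*(m-1) : ℝ), (2*b₁ + 2*s*(m-1) : ℝ)) ∈ L2 s := mem_L2_iff.2 ⟨m-1, b₁, by push_cast; rfl⟩
    have m2 : ((2*s*m : ℝ), (2*n + 2*s*m : ℝ)) ∈ L2 s := mem_L2_iff.2 ⟨m, n, rfl⟩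
    have hmem1 : p + ((2*s*(m-1) : ℝ), (2*b₁ + 2*s*(m-1) : ℝ)) ∈ F2 s := by
      rw [mem_F2_iff hs]
      refine ⟨by simp; push_cast; linarith, by simp; push_cast; linarith,
        by simp; push_cast; linarith, by simp; push_cast; linarith⟩
    have hmem2 : p + ((2*s*m : ℝ), (2*n + 2*s*m : ℝ)) ∈ F2 s := by
      rw [mem_F2_iff hs]
      refine ⟨by simp; linarith, by simp; linarith, by simp; linarith, by simp; linarith⟩
    have e1 := hWuniq _ ⟨m1, hmem1⟩
    have e2 := hWuniq _ ⟨m2, hmem2⟩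
    have : (2*s*(m-1) : ℝ) = 2*s*m := by
      have := congrArg Prod.fst (e1.trans e2.symm)
      simpa using this
    push_cast at this
    nlinarith
  · rcases lt_or_ge (-1) (p.1 + p.2 + 4*s*m + 2*n) with h | h
    · exact h
    exfalso
    have heq : p.1 + p.2 + 4*s*m + 2*n = -1 := le_antisymm (by linarith) (by linarith)
    have m1 : ((2*s*m : ℝ), (2*(n+1) + 2*s*m : ℝ)) ∈ L2 s := mem_L2_iff.2 ⟨m, n+1, by push_cast; rfl⟩
    have m2 : ((2*s*m : ℝ), (2*n + 2*s*m : ℝ)) ∈ L2 s := mem_L2_iff.2 ⟨m, n, rfl⟩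
    have hmem1 : p + ((2*s*m : ℝ), (2*(n+1) + 2*s*m : ℝ)) ∈ F2 s := by
      rw [mem_F2_iff hs]
      refine ⟨by simp; linarith, by simp; linarith,
        by simp; push_cast; linarith, by simp; push_cast; linarith⟩
    have hmem2 : p + ((2*s*m : ℝ), (2*n + 2*s*m : ℝ)) ∈ F2 s := by
      rw [mem_F2_iff hs]
      refine ⟨by simp; linarith, by simp; linarith, by simp; linarith, by simp; linarith⟩
    have e1 := hWuniq _ ⟨m1, hmem1⟩
    have e2 := hWuniq _ ⟨m2, hmem2⟩
    have : (2*(n+1) + 2*s*m : ℝ) = 2*n + 2*s*m := by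
      have := congrArg Prod.snd (e1.trans e2.symm)
      simpa using this
    push_cast at this
    nlinarith
  · rcases lt_or_ge (p.1 + p.2 + 4*s*m + 2*n) 1 with h | h
    · exact h
    exfalso
    have heq : p.1 + p.2 + 4*s*m + 2*n = 1 := le_antisymm (by linarith) (by linarith)
    have m1 : ((2*s*m : ℝ), (2*(n-1) + 2*s*m : ℝ)) ∈ L2 s := mem_L2_iff.2 ⟨m, n-1, by push_cast; rfl⟩
    have m2 : ((2*s*m : ℝ), (2*n + 2*s*m : ℝ)) ∈ L2 s := mem_L2_iff.2 ⟨m, n, rfl⟩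
    have hmem1 : p + ((2*s*m : ℝ), (2*(n-1) + 2*s*m : ℝ)) ∈ F2 s := by
      rw [mem_F2_iff hs]
      refine ⟨by simp; linarith, by simp; linarith,
        by simp; push_cast; linarith, by simp; push_cast; linarith⟩
    have hmem2 : p + ((2*s*m : ℝ), (2*n + 2*s*m : ℝ)) ∈ F2 s := by
      rw [mem_F2_iff hs]
      refine ⟨by simp; linarith, by simp; linarith, by simp; linarith, by simp; linarith⟩
    have e1 := hWuniq _ ⟨m1, hmem1⟩
    have e2 := hWuniq _ ⟨m2, hmem2⟩
    have : (2*(n-1) + 2*s*m : ℝ) = 2*n + 2*s*m := by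
      have := congrArg Prod.snd (e1.trans e2.symm)
      simpa using this
    push_cast at this
    nlinarith

lemma extractB {s : ℝ} (hs : 0 < s) {p r : ℝ × ℝ}
    (hEU : ∃! V, V ∈ L1 s ∧ p + V ∈ F1 s) (hL : r - p ∈ L1 s) (hF : r ∈ F1 s) :
    ∃ m n : ℤ, r = p + ((2*n + 2*s*m : ℝ), (-(2*s*m) : ℝ)) ∧
      -s < p.2 - 2*s*m ∧ p.2 - 2*s*m < s ∧
      -1 < p.1 - p.2 + 4*s*m + 2*n ∧ p.1 - p.2 + 4*s*m + 2*n < 1 := by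
  obtain ⟨m, n, hmn⟩ := mem_L1_iff.1 hL
  have hr : r = p + ((2*n + 2*s*m : ℝ), (-(2*s*m) : ℝ)) := by
    have : r = p + (r - p) := by abel
    rw [this, hmn]
  rw [mem_F1_iff hs] at hF
  rw [hr] at hF
  simp only [Prod.fst_add, Prod.snd_add] at hF
  obtain ⟨g1, g2, g3, g4⟩ := hF
  obtain ⟨W₀, hW₀, hWuniq⟩ := hEU
  have mk : ∀ (a c : ℤ), ((2*c + 2*s*a : ℝ), (-(2*s*a) : ℝ)) ∈ L1 s :=
    fun a c => mem_L1_iff.2 ⟨a, c, rfl⟩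
  have memF : ∀ (a c : ℤ), -s ≤ p.2 - 2*s*a → p.2 - 2*s*a ≤ s →
      -1 ≤ p.1 - p.2 + 4*s*a + 2*c → p.1 - p.2 + 4*s*a + 2*c ≤ 1 →
      p + ((2*c + 2*s*a : ℝ), (-(2*s*a) : ℝ)) ∈ F1 s := by
    intro a c u1 u2 u3 u4
    rw [mem_F1_iff hs]
    refine ⟨by simp; linarith, by simp; linarith, by simp; linarith, by simp; linarith⟩
  refine ⟨m, n, hr, ?_, ?_, ?_, ?_⟩
  · rcases lt_or_ge (-s) (p.2 - 2*s*m) with h | h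
    · exact h
    exfalso
    have heq : p.2 - 2*s*m = -s := le_antisymm (by linarith) (by linarith)
    obtain ⟨b₁, hb1, hb2⟩ := int_window (p.1 - p.2 + 4*s*(m-1))
    have hmem1 := memF (m-1) b₁ (by push_cast; linarith) (by push_cast; linarith)
      (by push_cast; push_cast at hb1; linarith) (by push_cast; push_cast at hb2; linarith)
    have hmem2 := memF m n (by linarith) (by linarith) (by linarith) (by linarith)
    have e1 := hWuniq _ ⟨mk (m-1) b₁, hmem1⟩
    have e2 := hWuniq _ ⟨mk m n, hmem2⟩
    have : (-(2*s*((m:ℝ)-1))) = -(2*s*m) := by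
      have := congrArg Prod.snd (e1.trans e2.symm)
      push_cast at this ⊢; simpa using this
    nlinarith
  · rcases lt_or_ge (p.2 - 2*s*m) s with h | h
    · exact h
    exfalso
    have heq : p.2 - 2*s*m = s := le_antisymm (by linarith) (by linarith)
    obtain ⟨b₁, hb1, hb2⟩ := int_window (p.1 - p.2 + 4*s*(m+1))
    have hmem1 := memF (m+1) b₁ (by push_cast; linarith) (by push_cast; linarith)
      (by push_cast; push_cast at hb1; linarith) (by push_cast; push_cast at hb2; linarith)
    have hmem2 := memF m n (by linarith) (by linarith) (by linarith) (by linarith)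
    have e1 := hWuniq _ ⟨mk (m+1) b₁, hmem1⟩
    have e2 := hWuniq _ ⟨mk m n, hmem2⟩
    have : (-(2*s*((m:ℝ)+1))) = -(2*s*m) := by
      have := congrArg Prod.snd (e1.trans e2.symm)
      push_cast at this ⊢; simpa using this
    nlinarith
  · rcases lt_or_ge (-1) (p.1 - p.2 + 4*s*m + 2*n) with h | h
    · exact h
    exfalso
    have heq : p.1 - p.2 + 4*s*m + 2*n = -1 := le_antisymm (by linarith) (by linarith)
    have hmem1 := memF m (n+1) (by linarith) (by linarith) (by push_cast; linarith)
      (by push_cast; linarith)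
    have hmem2 := memF m n (by linarith) (by linarith) (by linarith) (by linarith)
    have e1 := hWuniq _ ⟨mk m (n+1), hmem1⟩
    have e2 := hWuniq _ ⟨mk m n, hmem2⟩
    have : (2*((n:ℝ)+1) + 2*s*m) = 2*n + 2*s*m := by
      have := congrArg Prod.fst (e1.trans e2.symm)
      push_cast at this ⊢; simpa using this
    nlinarith
  · rcases lt_or_ge (p.1 - p.2 + 4*s*m + 2*n) 1 with h | h
    · exact h
    exfalso
    have heq : p.1 - p.2 + 4*s*m + 2*n = 1 := le_antisymm (by linarith) (by linarith)
    have hmem1 := memF m (n-1) (by linarith) (by linarith) (by push_cast; linarith)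
      (by push_cast; linarith)
    have hmem2 := memF m n (by linarith) (by linarith) (by linarith) (by linarith)
    have e1 := hWuniq _ ⟨mk m (n-1), hmem1⟩
    have e2 := hWuniq _ ⟨mk m n, hmem2⟩
    have : (2*((n:ℝ)-1) + 2*s*m) = 2*n + 2*s*m := by
      have := congrArg Prod.fst (e1.trans e2.symm)
      push_cast at this ⊢; simpa using this
    nlinarith

-- ### characterization of fRel on F1

lemma fRel_char {s : ℝ} (hs : 0 < s) {p V : ℝ × ℝ} (hp : p ∈ F1 s) :
    fRel s p (p + V) ↔
    ((∃ m n m' n' : ℤ, V.1 = 2*n' + 2*s*m + 2*s*m' ∧ V.2 = 2*n + 2*s*m - 2*s*m' ∧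
        (-s < p.1 + 2*s*m) ∧ (p.1 + 2*s*m < s) ∧
        (-1 < p.1 + p.2 + 4*s*m + 2*n) ∧ (p.1 + p.2 + 4*s*m + 2*n < 1) ∧
        (-s < p.2 + 2*n + 2*s*m - 2*s*m') ∧ (p.2 + 2*n + 2*s*m - 2*s*m' < s) ∧
        (-1 < p.1 - p.2 - 2*n + 2*n' + 4*s*m') ∧ (p.1 - p.2 - 2*n + 2*n' + 4*s*m' < 1)) ∨
      (∃ m n : ℤ, V.1 = 2*s*m ∧ V.2 = 2*n + 2*s*m ∧
        (-s < p.1 + 2*s*m) ∧ (p.1 + 2*s*m < s) ∧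
        (-1 < p.1 + p.2 + 4*s*m + 2*n) ∧ (p.1 + p.2 + 4*s*m + 2*n < 1) ∧
        (-s ≤ p.2 + 2*n + 2*s*m) ∧ (p.2 + 2*n + 2*s*m ≤ s) ∧
        (-1 ≤ p.1 - p.2 - 2*n) ∧ (p.1 - p.2 - 2*n ≤ 1)) ∨
      ((-s ≤ p.1) ∧ (p.1 ≤ s) ∧ (-1 ≤ p.1 + p.2) ∧ (p.1 + p.2 ≤ 1) ∧
        (-s < p.2) ∧ (p.2 < s) ∧ (-1 < p.1 - p.2) ∧ (p.1 - p.2 < 1) ∧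
        ∃ m n : ℤ, V.1 = 2*s*m ∧ V.2 = 2*n + 2*s*m ∧
        (-s < p.1 + 2*s*m) ∧ (p.1 + 2*s*m < s) ∧
        (-1 < p.1 + p.2 + 4*s*m + 2*n) ∧ (p.1 + p.2 + 4*s*m + 2*n < 1)) ∨
      (V = 0 ∧ (-s ≤ p.1) ∧ (p.1 ≤ s) ∧ (-1 ≤ p.1 + p.2) ∧ (p.1 + p.2 ≤ 1) ∧
        (-s < p.2) ∧ (p.2 < s) ∧ (-1 < p.1 - p.2) ∧ (p.1 - p.2 < 1))) := by
  obtain ⟨c1, c2, c3, c4⟩ := (mem_F1_iff hs).1 hp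
  constructor
  · rintro ⟨r, hstep1, hstep2⟩
    rcases hstep1 with ⟨-, hEU, hL, hF⟩ | ⟨hpF2, hEU, hL, hF⟩
    · -- first step of type A
      obtain ⟨m, n, hr, a1, a2, a3, a4⟩ := extractA hs hEU hL hF
      have hr1 : r.1 = p.1 + 2*s*m := by rw [hr]; simp
      have hr2 : r.2 = p.2 + (2*n + 2*s*m) := by rw [hr]; simp
      rcases hstep2 with ⟨hrF1, hEU2, hL2, hF2q⟩ | ⟨-, hEU2, hL2, hF2q⟩
      · -- second step of type A : collapses, total vector in L2
        obtain ⟨m₂, n₂, hq, d1, d2, d3, d4⟩ := extractA hs hEU2 hL2 hF2q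
        rw [hr1] at d1 d2
        rw [hr1, hr2] at d3 d4
        have hm₂ : m₂ = 0 := by
          apply int_zero_of_mul hs (k := m₂) <;> linarith
        subst hm₂
        push_cast at d3 d4
        have hn₂ : n₂ = 0 := by
          apply int_eq_of_cast_lt (k := n₂) <;> linarith
        subst hn₂
        have hqr : p + V = r := by
          rw [hq]; ext <;> simp
        have hV : V = ((2*s*m : ℝ), (2*n + 2*s*m : ℝ)) := by
          have : p + V = p + ((2*s*m : ℝ), (2*n + 2*s*m : ℝ)) := by rw [hqr, hr]
          exact add_left_cancel this
        obtain ⟨e1, e2, e3, e4⟩ := (mem_F1_iff hs).1 hrF1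
        rw [hr2] at e1 e2
        rw [hr1, hr2] at e3 e4
        refine Or.inr (Or.inl ⟨m, n, by rw [hV], by rw [hV], a1, a2, a3, a4,
          by linarith, by linarith, by linarith, by linarith⟩)
      · -- second step of type B : generic AB
        obtain ⟨m', n', hq, d1, d2, d3, d4⟩ := extractB hs hEU2 hL2 hF2q
        rw [hr2] at d1 d2
        rw [hr1, hr2] at d3 d4
        have hV : V = ((2*n' + 2*s*m + 2*s*m' : ℝ), (2*n + 2*s*m - 2*s*m' : ℝ)) := by
          have : p + V = p + ((2*n' + 2*s*m + 2*s*m' : ℝ), (2*n + 2*s*m - 2*s*m' : ℝ)) := by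
            rw [hq, hr]; ext <;> simp <;> ring
          exact add_left_cancel this
        refine Or.inl ⟨m, n, m', n', by rw [hV], by rw [hV], a1, a2, a3, a4,
          by linarith, by linarith, by linarith, by linarith⟩
    · -- first step of type B : collapses, r = p
      obtain ⟨m₁, n₁, hr, a1, a2, a3, a4⟩ := extractB hs hEU hL hF
      have hm₁ : m₁ = 0 := by
        apply int_zero_of_mul hs (k := m₁) <;> linarith
      subst hm₁
      have hn₁ : n₁ = 0 := by
        apply int_eq_of_cast_lt (k := n₁) <;> push_cast at a3 a4 <;> linarith
      subst hn₁
      have hrp : r = p := by rw [hr]; ext <;> simp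
      rw [hrp] at hstep2
      push_cast at a1 a2 a3 a4
      obtain ⟨f1, f2, f3, f4⟩ := (mem_F2_iff hs).1 hpF2
      rcases hstep2 with ⟨-, hEU2, hL2, hF2q⟩ | ⟨-, hEU2, hL2, hF2q⟩
      · -- second step of type A : BA form
        obtain ⟨m, n, hq, d1, d2, d3, d4⟩ := extractA hs hEU2 hL2 hF2q
        have hV : V = ((2*s*m : ℝ), (2*n + 2*s*m : ℝ)) := by
          have : p + V = p + ((2*s*m : ℝ), (2*n + 2*s*m : ℝ)) := by rw [hq]
          exact add_left_cancel this
        exact Or.inr (Or.inr (Or.inl ⟨f1, f2, f3, f4, by linarith, by linarith,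
          by linarith, by linarith, m, n, by rw [hV], by rw [hV], d1, d2, d3, d4⟩))
      · -- second step of type B : collapses, BB form
        obtain ⟨m₂, n₂, hq, d1, d2, d3, d4⟩ := extractB hs hEU2 hL2 hF2q
        have hm₂ : m₂ = 0 := by
          apply int_zero_of_mul hs (k := m₂) <;> linarith
        subst hm₂
        have hn₂ : n₂ = 0 := by
          apply int_eq_of_cast_lt (k := n₂) <;> push_cast at d3 d4 <;> linarith
        subst hn₂
        have hV : V = 0 := by
          have : p + V = p + 0 := by
            rw [hq]; ext <;> simp
          exact add_left_cancel this
        exact Or.inr (Or.inr (Or.inr ⟨hV, f1, f2, f3, f4, by linarith, by linarith,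
          by linarith, by linarith⟩))
  · rintro (⟨m, n, m', n', e1, e2, a1, a2, a3, a4, b1, b2, b3, b4⟩ |
      ⟨m, n, e1, e2, a1, a2, a3, a4, b1, b2, b3, b4⟩ |
      ⟨f1, f2, f3, f4, g1, g2, g3, g4, m, n, e1, e2, a1, a2, a3, a4⟩ |
      ⟨hV0, f1, f2, f3, f4, g1, g2, g3, g4⟩)
    · -- AB
      refine ⟨p + ((2*s*m : ℝ), (2*n + 2*s*m : ℝ)), Or.inl ⟨hp, uniqueA hs a1 a2 a3 a4, ?_, ?_⟩,
        Or.inr ⟨?_, ?_, ?_, ?_⟩⟩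
      · have : p + ((2*s*m : ℝ), (2*n + 2*s*m : ℝ)) - p = ((2*s*m : ℝ), (2*n + 2*s*m : ℝ)) := by
          abel
        rw [this]; exact mem_L2_iff.2 ⟨m, n, rfl⟩
      · rw [mem_F2_iff hs]
        refine ⟨by simp; linarith, by simp; linarith, by simp; linarith, by simp; linarith⟩
      · rw [mem_F2_iff hs]
        refine ⟨by simp; linarith, by simp; linarith, by simp; linarith, by simp; linarith⟩
      · exact uniqueB hs (m := m') (n := n') (by simp; linarith) (by simp; linarith)
          (by simp; linarith) (by simp; linarith)
      · have : p + V - (p + ((2*s*m : ℝ), (2*n + 2*s*m : ℝ)))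
            = ((2*n' + 2*s*m' : ℝ), (-(2*s*m') : ℝ)) := by
          have hV1 := e1; have hV2 := e2
          ext
          · simp only [Prod.fst_sub, Prod.fst_add]; rw [hV1]; ring
          · simp only [Prod.snd_sub, Prod.snd_add]; rw [hV2]; ring
        rw [this]; exact mem_L1_iff.2 ⟨m', n', rfl⟩
      · rw [mem_F1_iff hs]
        refine ⟨?_, ?_, ?_, ?_⟩ <;> simp only [Prod.fst_add, Prod.snd_add] <;>
          linarith [e1, e2]
    · -- AA
      have hVeq : V = ((2*s*m : ℝ), (2*n + 2*s*m : ℝ)) := by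
        ext
        · rw [e1]
        · rw [e2]
      refine ⟨p + V, Or.inl ⟨hp, uniqueA hs a1 a2 a3 a4, ?_, ?_⟩,
        Or.inl ⟨?_, ?_, ?_, ?_⟩⟩
      · have : p + V - p = V := by abel
        rw [this, hVeq]; exact mem_L2_iff.2 ⟨m, n, rfl⟩
      · rw [mem_F2_iff hs, hVeq]
        refine ⟨by simp; linarith, by simp; linarith, by simp; linarith, by simp; linarith⟩
      · rw [mem_F1_iff hs, hVeq]
        refine ⟨by simp; linarith, by simp; linarith, by simp; linarith, by simp; linarith⟩
      · refine uniqueA hs (m := 0) (n := 0) ?_ ?_ ?_ ?_ <;> rw [hVeq] <;> simp <;> linarith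
      · have : p + V - (p + V) = 0 := by abel
        rw [this]; exact AddSubgroup.zero_mem _
      · rw [mem_F2_iff hs, hVeq]
        refine ⟨by simp; linarith, by simp; linarith, by simp; linarith, by simp; linarith⟩
    · -- BA
      have hVeq : V = ((2*s*m : ℝ), (2*n + 2*s*m : ℝ)) := by
        ext
        · rw [e1]
        · rw [e2]
      refine ⟨p, Or.inr ⟨(mem_F2_iff hs).2 ⟨f1, f2, f3, f4⟩,
        uniqueB hs (m := 0) (n := 0) (by simp; linarith) (by simp; linarith)
          (by simp; linarith) (by simp; linarith), by simp, hp⟩,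
        Or.inl ⟨hp, uniqueA hs a1 a2 a3 a4, ?_, ?_⟩⟩
      · have : p + V - p = V := by abel
        rw [this, hVeq]; exact mem_L2_iff.2 ⟨m, n, rfl⟩
      · rw [mem_F2_iff hs, hVeq]
        refine ⟨by simp; linarith, by simp; linarith, by simp; linarith, by simp; linarith⟩
    · -- BB
      subst hV0
      refine ⟨p, Or.inr ⟨(mem_F2_iff hs).2 ⟨f1, f2, f3, f4⟩,
        uniqueB hs (m := 0) (n := 0) (by simp; linarith) (by simp; linarith)
          (by simp; linarith) (by simp; linarith), by simp, hp⟩,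
        Or.inr ⟨(mem_F2_iff hs).2 ⟨f1, f2, f3, f4⟩,
        uniqueB hs (m := 0) (n := 0) (by simp; linarith) (by simp; linarith)
          (by simp; linarith) (by simp; linarith), by simp, by
            simpa using hp⟩⟩

-- ### the gap lemma : small vectors in L1 ∩ L2 vanish

lemma spin1 {s : ℝ} (hs4 : 1/4 < s) (hs1 : s < 1) (h3 : s ≠ 1/3) (h2 : s ≠ 1/2)
    {g : ℤ} (hgk : s * (g:ℝ) = 1) : False := by
  have hs0 : (0:ℝ) < s := by linarith
  have hgpos : (0:ℝ) < (g:ℝ) := by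
    by_contra hng
    push_neg at hng
    nlinarith [mul_nonneg hs0.le (by linarith : (0:ℝ) ≤ -(g:ℝ))]
  have hg1 : (1:ℝ) < (g:ℝ) := by nlinarith [mul_lt_mul_of_pos_right hs1 hgpos]
  have hg4 : (g:ℝ) < 4 := by nlinarith [mul_lt_mul_of_pos_right hs4 hgpos]
  have i0 : (0:ℤ) < g := by exact_mod_cast hgpos
  have i1 : 1 < g := by exact_mod_cast hg1
  have i2 : g < 4 := by exact_mod_cast hg4
  interval_cases g
  · exact h2 (by push_cast at hgk; linarith)
  · exact h3 (by push_cast at hgk; linarith)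

lemma gap {s : ℝ} (hs4 : 1/4 < s) (hs1 : s < 1) (h3 : s ≠ 1/3) (h2 : s ≠ 1/2)
    {W : ℝ × ℝ} (hW1 : W ∈ L1 s) (hW2 : W ∈ L2 s)
    (hx1 : -3 < W.1) (hx2 : W.1 < 3) (hy1 : -3 < W.2) (hy2 : W.2 < 3) : W = 0 := by
  have hs0 : (0:ℝ) < s := by linarith
  obtain ⟨a, b, hab⟩ := mem_L2_iff.1 hW2
  obtain ⟨c, e, hce⟩ := mem_L1_iff.1 hW1
  have w1a : W.1 = 2*s*a := by rw [hab]
  have w2a : W.2 = 2*b + 2*s*a := by rw [hab]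
  have w1c : W.1 = 2*e + 2*s*c := by rw [hce]
  have w2c : W.2 = -(2*s*c) := by rw [hce]
  have hW1eb : W.1 = (e:ℝ) - b := by linarith
  have hW2eb : W.2 = (e:ℝ) + b := by linarith
  have hg : s * ((a:ℝ) + c) = -(b:ℝ) := by nlinarith [w1a, w2c, hW1eb, hW2eb]
  have hh : s * ((a:ℝ) - c) = (e:ℝ) := by nlinarith [w1a, w2c, hW1eb, hW2eb]
  have ib1 : -3 < e - b := by exact_mod_cast (by rw [← hW1eb]; exact hx1 : (-3:ℝ) < (e:ℝ) - b)
  have ib2 : e - b < 3 := by exact_mod_cast (by rw [← hW1eb]; exact hx2 : ((e:ℝ) - b : ℝ) < 3)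
  have ib3 : -3 < e + b := by exact_mod_cast (by rw [← hW2eb]; exact hy1 : (-3:ℝ) < (e:ℝ) + b)
  have ib4 : e + b < 3 := by exact_mod_cast (by rw [← hW2eb]; exact hy2 : ((e:ℝ) + b : ℝ) < 3)
  have hbb1 : -2 ≤ b := by omega
  have hbb2 : b ≤ 2 := by omega
  have hsum : (a + c) + (a - c) = 2*a := by ring
  interval_cases b
  · -- b = -2 : e = 0, a - c = 0, s*(a+c) = 2 with a+c = 2a
    exfalso
    have he : e = 0 := by omega
    subst he
    have hac : a - c = 0 := by
      have h0 : s * ((a:ℝ) - c) = 0 := by push_cast at hh ⊢; linarith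
      have : ((a:ℝ) - c) = 0 := by
        rcases mul_eq_zero.1 h0 with h | h
        · linarith
        · exact h
      exact_mod_cast this
    have hceq : a + c = 2*a := by omega
    have hcast : ((a:ℝ) + c) = 2*(a:ℝ) := by exact_mod_cast hceq
    have : s * ((a:ℝ)) = 1 := by
      rw [hcast] at hg
      push_cast at hg
      linarith
    exact spin1 hs4 hs1 h3 h2 this
  · -- b = -1 : s*(a+c) = 1
    exfalso
    refine spin1 hs4 hs1 h3 h2 (g := a + c) ?_
    push_cast
    push_cast at hg
    linarith
  · -- b = 0 : a + c = 0, a - c = 2a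
    have hac : a + c = 0 := by
      have h0 : s * ((a:ℝ) + c) = 0 := by push_cast at hg ⊢; linarith
      have : ((a:ℝ) + c) = 0 := by
        rcases mul_eq_zero.1 h0 with h | h
        · linarith
        · exact h
      exact_mod_cast this
    have hceq : a - c = 2*a := by omega
    have hcast : ((a:ℝ) - c) = 2*(a:ℝ) := by exact_mod_cast hceq
    rw [hcast] at hh
    have heb1 : -2 ≤ e := by omega
    have heb2 : e ≤ 2 := by omega
    by_cases ha0 : a = 0
    · -- W = 0
      subst ha0
      have he : e = 0 := by
        have : (e:ℝ) = 0 := by push_cast at hh; linarith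
        exact_mod_cast this
      subst he
      have hw1 : W.1 = 0 := by rw [hW1eb]; norm_num
      have hw2 : W.2 = 0 := by rw [hW2eb]; norm_num
      ext
      · exact hw1
      · exact hw2
    · exfalso
      interval_cases e
      · -- e = -2 : s*(-a) = 1
        refine spin1 hs4 hs1 h3 h2 (g := -a) ?_
        push_cast
        push_cast at hh
        linarith
      · -- e = -1 : s*(-2a) = 1
        refine spin1 hs4 hs1 h3 h2 (g := -(2*a)) ?_
        push_cast
        push_cast at hh
        linarith
      · -- e = 0 : a = 0, contradiction
        apply ha0
        have h0 : s * (2*(a:ℝ)) = 0 := by push_cast at hh; linarith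
        have : (2*(a:ℝ)) = 0 := by
          rcases mul_eq_zero.1 h0 with h | h
          · linarith
          · exact h
        have : (a:ℝ) = 0 := by linarith
        exact_mod_cast this
      · -- e = 1 : s*(2a) = 1
        refine spin1 hs4 hs1 h3 h2 (g := 2*a) ?_
        push_cast
        push_cast at hh
        linarith
      · -- e = 2 : s*a = 1
        refine spin1 hs4 hs1 h3 h2 (g := a) ?_
        push_cast
        push_cast at hh
        linarith
  · -- b = 1 : s*(-(a+c)) = 1
    exfalso
    refine spin1 hs4 hs1 h3 h2 (g := -(a+c)) ?_
    push_cast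
    push_cast at hg
    linarith
  · -- b = 2 : e = 0, a-c = 0, s*a = 1
    exfalso
    have he : e = 0 := by omega
    subst he
    have hac : a - c = 0 := by
      have h0 : s * ((a:ℝ) - c) = 0 := by push_cast at hh ⊢; linarith
      have : ((a:ℝ) - c) = 0 := by
        rcases mul_eq_zero.1 h0 with h | h
        · linarith
        · exact h
      exact_mod_cast this
    have hceq : a + c = 2*a := by omega
    have hcast : ((a:ℝ) + c) = 2*(a:ℝ) := by exact_mod_cast hceq
    refine spin1 hs4 hs1 h3 h2 (g := -a) ?_
    rw [hcast] at hg
    push_cast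
    push_cast at hg
    linarith

-- ### integer bounds and parameter pinning helpers for rigidity

lemma t_bound_high {s : ℝ} (hs : 1/2 < s) {t : ℤ}
    (h1 : -(1+2*s) < 2*s*(t:ℝ)) (h2 : 2*s*(t:ℝ) < 1+2*s) : -1 ≤ t ∧ t ≤ 1 := by
  have hs0 : (0:ℝ) < s := by linarith
  constructor
  · by_contra h
    push_neg at h
    have : (t:ℝ) ≤ -2 := by exact_mod_cast (by omega : t ≤ -2)
    nlinarith [mul_nonneg hs0.le (by linarith : (0:ℝ) ≤ -(t:ℝ) - 2)]
  · by_contra h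
    push_neg at h
    have : (2:ℝ) ≤ (t:ℝ) := by exact_mod_cast (by omega : (2:ℤ) ≤ t)
    nlinarith [mul_nonneg hs0.le (by linarith : (0:ℝ) ≤ (t:ℝ) - 2)]

lemma t_bound_low {s : ℝ} (hs : 1/4 < s) {t : ℤ}
    (h1 : -(1+2*s) < 2*s*(t:ℝ)) (h2 : 2*s*(t:ℝ) < 1+2*s) : -2 ≤ t ∧ t ≤ 2 := by
  have hs0 : (0:ℝ) < s := by linarith
  constructor
  · by_contra h
    push_neg at h
    have : (t:ℝ) ≤ -3 := by exact_mod_cast (by omega : t ≤ -3)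
    nlinarith [mul_nonneg hs0.le (by linarith : (0:ℝ) ≤ -(t:ℝ) - 3)]
  · by_contra h
    push_neg at h
    have : (3:ℝ) ≤ (t:ℝ) := by exact_mod_cast (by omega : (3:ℤ) ≤ t)
    nlinarith [mul_nonneg hs0.le (by linarith : (0:ℝ) ≤ (t:ℝ) - 3)]

lemma shigh {s : ℝ} (hs : 1/2 < s) (hs1 : s < 1) {u k : ℤ}
    (hk : (k:ℝ) = s * (u:ℝ)) (hu1 : -4 ≤ u) (hu2 : u ≤ 4) :
    u = 0 ∨ (s = 2/3 ∧ (u = 3 ∧ k = 2 ∨ u = -3 ∧ k = -2)) ∨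
      (s = 3/4 ∧ (u = 4 ∧ k = 3 ∨ u = -4 ∧ k = -3)) := by
  have getk : ∀ lo hi : ℝ, lo < (k:ℝ) → (k:ℝ) < hi → ∀ klo khi : ℤ, (klo:ℝ) ≤ lo → hi ≤ (khi:ℝ) →
      klo < k ∧ k < khi := by
    intro lo hi hlo hhi klo khi hklo hkhi
    constructor
    · exact_mod_cast lt_of_le_of_lt hklo hlo
    · exact_mod_cast lt_of_lt_of_le hhi hkhi
  interval_cases u <;> push_cast at hk
  · -- u = -4 : k = -3, s = 3/4
    obtain ⟨g1, g2⟩ := getk (-4) (-2) (by linarith) (by linarith) (-4) (-2) (by norm_num) (by norm_num)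
    have hk3 : k = -3 := by omega
    refine Or.inr (Or.inr ⟨by rw [hk3] at hk; push_cast at hk; linarith, Or.inr ⟨rfl, hk3⟩⟩)
  · -- u = -3 : k = -2, s = 2/3
    obtain ⟨g1, g2⟩ := getk (-3) (-3/2) (by linarith) (by linarith) (-3) (-1) (by norm_num)
      (by norm_num)
    have hk2 : k = -2 := by omega
    refine Or.inr (Or.inl ⟨by rw [hk2] at hk; push_cast at hk; linarith, Or.inr ⟨rfl, hk2⟩⟩)
  · obtain ⟨g1, g2⟩ := getk (-2) (-1) (by linarith) (by linarith) (-2) (-1) (by norm_num) (by norm_num)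
    omega
  · obtain ⟨g1, g2⟩ := getk (-1) (-1/2) (by linarith) (by linarith) (-1) 0 (by norm_num) (by norm_num)
    omega
  · exact Or.inl rfl
  · obtain ⟨g1, g2⟩ := getk (1/2) 1 (by linarith) (by linarith) 0 1 (by norm_num) (by norm_num)
    omega
  · obtain ⟨g1, g2⟩ := getk 1 2 (by linarith) (by linarith) 1 2 (by norm_num) (by norm_num)
    omega
  · -- u = 3 : k = 2, s = 2/3
    obtain ⟨g1, g2⟩ := getk (3/2) 3 (by linarith) (by linarith) 1 3 (by norm_num) (by norm_num)
    have hk2 : k = 2 := by omega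
    refine Or.inr (Or.inl ⟨by rw [hk2] at hk; push_cast at hk; linarith, Or.inl ⟨rfl, hk2⟩⟩)
  · -- u = 4 : k = 3, s = 3/4
    obtain ⟨g1, g2⟩ := getk 2 4 (by linarith) (by linarith) 2 4 (by norm_num) (by norm_num)
    have hk3 : k = 3 := by omega
    refine Or.inr (Or.inr ⟨by rw [hk3] at hk; push_cast at hk; linarith, Or.inl ⟨rfl, hk3⟩⟩)

lemma slow {s : ℝ} (hs4 : 1/4 < s) (hs5 : s < 1/2) (h3 : s ≠ 1/3) {u k : ℤ}
    (hk : (k:ℝ) = s * (u:ℝ)) (hu1 : -8 ≤ u) (hu2 : u ≤ 8) :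
    u = 0 ∨ (s = 2/5 ∧ (u = 5 ∧ k = 2 ∨ u = -5 ∧ k = -2)) ∨
      (s = 2/7 ∧ (u = 7 ∧ k = 2 ∨ u = -7 ∧ k = -2)) ∨
      (s = 3/7 ∧ (u = 7 ∧ k = 3 ∨ u = -7 ∧ k = -3)) ∨
      (s = 3/8 ∧ (u = 8 ∧ k = 3 ∨ u = -8 ∧ k = -3)) := by
  have getk : ∀ lo hi : ℝ, lo < (k:ℝ) → (k:ℝ) < hi → ∀ klo khi : ℤ, (klo:ℝ) ≤ lo → hi ≤ (khi:ℝ) →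
      klo < k ∧ k < khi := by
    intro lo hi hlo hhi klo khi hklo hkhi
    constructor
    · exact_mod_cast lt_of_le_of_lt hklo hlo
    · exact_mod_cast lt_of_lt_of_le hhi hkhi
  interval_cases u <;> push_cast at hk
  · -- u = -8 : k ∈ (-4,-2) → k = -3, s = 3/8
    obtain ⟨g1, g2⟩ := getk (-4) (-2) (by linarith) (by linarith) (-4) (-2) (by norm_num) (by norm_num)
    have hk3 : k = -3 := by omega
    refine Or.inr (Or.inr (Or.inr (Or.inr ⟨by rw [hk3] at hk; push_cast at hk; linarith,
      Or.inr ⟨rfl, hk3⟩⟩)))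
  · -- u = -7 : k ∈ (-7/2,-7/4) → k ∈ {-3,-2}
    obtain ⟨g1, g2⟩ := getk (-7/2) (-7/4) (by linarith) (by linarith) (-4) (-1) (by norm_num)
      (by norm_num)
    have : k = -3 ∨ k = -2 := by omega
    rcases this with hk3 | hk2
    · refine Or.inr (Or.inr (Or.inr (Or.inl ⟨by rw [hk3] at hk; push_cast at hk; linarith,
        Or.inr ⟨rfl, hk3⟩⟩)))
    · refine Or.inr (Or.inr (Or.inl ⟨by rw [hk2] at hk; push_cast at hk; linarith,
        Or.inr ⟨rfl, hk2⟩⟩))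
  · -- u = -6 : k = -2 → s = 1/3 excluded
    obtain ⟨g1, g2⟩ := getk (-3) (-3/2) (by linarith) (by linarith) (-3) (-1) (by norm_num)
      (by norm_num)
    have hk2 : k = -2 := by omega
    exact absurd (by rw [hk2] at hk; push_cast at hk; linarith : s = 1/3) h3
  · -- u = -5 : k = -2 → s = 2/5
    obtain ⟨g1, g2⟩ := getk (-5/2) (-5/4) (by linarith) (by linarith) (-3) (-1) (by norm_num)
      (by norm_num)
    have hk2 : k = -2 := by omega
    refine Or.inr (Or.inl ⟨by rw [hk2] at hk; push_cast at hk; linarith, Or.inr ⟨rfl, hk2⟩⟩)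
  · -- u = -4 : k ∈ (-2,-1) → none
    obtain ⟨g1, g2⟩ := getk (-2) (-1) (by linarith) (by linarith) (-2) (-1) (by norm_num) (by norm_num)
    omega
  · -- u = -3 : k = -1 → s = 1/3 excluded
    obtain ⟨g1, g2⟩ := getk (-3/2) (-3/4) (by linarith) (by linarith) (-2) 0 (by norm_num) (by norm_num)
    have hk1 : k = -1 := by omega
    exact absurd (by rw [hk1] at hk; push_cast at hk; linarith : s = 1/3) h3
  · obtain ⟨g1, g2⟩ := getk (-1) (-1/2) (by linarith) (by linarith) (-1) 0 (by norm_num) (by norm_num)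
    omega
  · obtain ⟨g1, g2⟩ := getk (-1/2) (-1/4) (by linarith) (by linarith) (-1) 0 (by norm_num) (by norm_num)
    omega
  · exact Or.inl rfl
  · obtain ⟨g1, g2⟩ := getk (1/4) (1/2) (by linarith) (by linarith) 0 1 (by norm_num) (by norm_num)
    omega
  · obtain ⟨g1, g2⟩ := getk (1/2) 1 (by linarith) (by linarith) 0 1 (by norm_num) (by norm_num)
    omega
  · -- u = 3
    obtain ⟨g1, g2⟩ := getk (3/4) (3/2) (by linarith) (by linarith) 0 2 (by norm_num) (by norm_num)
    have hk1 : k = 1 := by omega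
    exact absurd (by rw [hk1] at hk; push_cast at hk; linarith : s = 1/3) h3
  · obtain ⟨g1, g2⟩ := getk 1 2 (by linarith) (by linarith) 1 2 (by norm_num) (by norm_num)
    omega
  · -- u = 5
    obtain ⟨g1, g2⟩ := getk (5/4) (5/2) (by linarith) (by linarith) 1 3 (by norm_num) (by norm_num)
    have hk2 : k = 2 := by omega
    refine Or.inr (Or.inl ⟨by rw [hk2] at hk; push_cast at hk; linarith, Or.inl ⟨rfl, hk2⟩⟩)
  · -- u = 6
    obtain ⟨g1, g2⟩ := getk (3/2) 3 (by linarith) (by linarith) 1 3 (by norm_num) (by norm_num)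
    have hk2 : k = 2 := by omega
    exact absurd (by rw [hk2] at hk; push_cast at hk; linarith : s = 1/3) h3
  · -- u = 7
    obtain ⟨g1, g2⟩ := getk (7/4) (7/2) (by linarith) (by linarith) 1 4 (by norm_num) (by norm_num)
    have : k = 2 ∨ k = 3 := by omega
    rcases this with hk2 | hk3
    · refine Or.inr (Or.inr (Or.inl ⟨by rw [hk2] at hk; push_cast at hk; linarith,
        Or.inl ⟨rfl, hk2⟩⟩))
    · refine Or.inr (Or.inr (Or.inr (Or.inl ⟨by rw [hk3] at hk; push_cast at hk; linarith,
        Or.inl ⟨rfl, hk3⟩⟩)))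
  · -- u = 8
    obtain ⟨g1, g2⟩ := getk 2 4 (by linarith) (by linarith) 2 4 (by norm_num) (by norm_num)
    have hk3 : k = 3 := by omega
    refine Or.inr (Or.inr (Or.inr (Or.inr ⟨by rw [hk3] at hk; push_cast at hk; linarith,
      Or.inl ⟨rfl, hk3⟩⟩)))

-- ### rigidity : two AB-pieces with the same total vector have the same data

set_option maxHeartbeats 2000000 in
lemma rigidity {s : ℝ} (hs4 : 1/4 < s) (hs1 : s < 1) (h3 : s ≠ 1/3) (h2 : s ≠ 1/2)
    {x1 y1 x2 y2 : ℝ} {m n m' n' M N M' N' : ℤ}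
    (c1 : -s ≤ y1) (c2 : y1 ≤ s) (c3 : -1 ≤ x1 - y1) (c4 : x1 - y1 ≤ 1)
    (e1 : -s ≤ y2) (e2 : y2 ≤ s) (e3 : -1 ≤ x2 - y2) (e4 : x2 - y2 ≤ 1)
    (a1 : -s < x1 + 2*s*m) (a2 : x1 + 2*s*m < s)
    (a3 : -1 < x1 + y1 + 4*s*m + 2*n) (a4 : x1 + y1 + 4*s*m + 2*n < 1)
    (a5 : -s < y1 + 2*n + 2*s*m - 2*s*m') (a6 : y1 + 2*n + 2*s*m - 2*s*m' < s)
    (a7 : -1 < x1 - y1 - 2*n + 2*n' + 4*s*m') (a8 : x1 - y1 - 2*n + 2*n' + 4*s*m' < 1)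
    (b1 : -s < x2 + 2*s*M) (b2 : x2 + 2*s*M < s)
    (b3 : -1 < x2 + y2 + 4*s*M + 2*N) (b4 : x2 + y2 + 4*s*M + 2*N < 1)
    (b5 : -s < y2 + 2*N + 2*s*M - 2*s*M') (b6 : y2 + 2*N + 2*s*M - 2*s*M' < s)
    (b7 : -1 < x2 - y2 - 2*N + 2*N' + 4*s*M') (b8 : x2 - y2 - 2*N + 2*N' + 4*s*M' < 1)
    (E1 : 2*(n':ℝ) + 2*s*m + 2*s*m' = 2*(N':ℝ) + 2*s*M + 2*s*M')
    (E2 : 2*(n:ℝ) + 2*s*m - 2*s*m' = 2*(N:ℝ) + 2*s*M - 2*s*M') :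
    m = M ∧ n = N ∧ m' = M' ∧ n' = N' := by
  have hs0 : (0:ℝ) < s := by linarith
  -- crude coordinate bounds give |2 s t| < 1 + 2 s for t = m, M, m', M'
  have hm1 : -(1+2*s) < 2*s*(m:ℝ) := by linarith
  have hm2 : 2*s*(m:ℝ) < 1+2*s := by linarith
  have hM1 : -(1+2*s) < 2*s*(M:ℝ) := by linarith
  have hM2 : 2*s*(M:ℝ) < 1+2*s := by linarith
  have hr1 : -(1+s) < y1 + 2*n + 2*s*m := by linarith
  have hr2 : y1 + 2*n + 2*s*m < 1+s := by linarith
  have hmp1 : -(1+2*s) < 2*s*(m':ℝ) := by linarith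
  have hmp2 : 2*s*(m':ℝ) < 1+2*s := by linarith
  have hR1 : -(1+s) < y2 + 2*N + 2*s*M := by linarith
  have hR2 : y2 + 2*N + 2*s*M < 1+s := by linarith
  have hMp1 : -(1+2*s) < 2*s*(M':ℝ) := by linarith
  have hMp2 : 2*s*(M':ℝ) < 1+2*s := by linarith
  -- lattice coincidence equations
  have hk : ((n' - N' : ℤ):ℝ) = s * ((M + M' - m - m' : ℤ):ℝ) := by push_cast; linarith
  have hl : ((n - N : ℤ):ℝ) = s * ((M - M' - m + m' : ℤ):ℝ) := by push_cast; linarith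
  have doneEq : M + M' - m - m' = 0 → M - M' - m + m' = 0 →
      (m = M ∧ n = N ∧ m' = M' ∧ n' = N') := by
    intro h1 h2'
    have hk0 : n' - N' = 0 := by
      have hc0 : ((M + M' - m - m' : ℤ):ℝ) = 0 := by rw [h1]; simp
      have : ((n' - N' : ℤ):ℝ) = 0 := by rw [hk, hc0, mul_zero]
      exact_mod_cast this
    have hl0 : n - N = 0 := by
      have hc0 : ((M - M' - m + m' : ℤ):ℝ) = 0 := by rw [h2']; simp
      have : ((n - N : ℤ):ℝ) = 0 := by rw [hl, hc0, mul_zero]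
      exact_mod_cast this
    omega
  rcases lt_or_gt_of_ne h2 with hlow | hhigh
  · -- 1/4 < s < 1/2
    obtain ⟨i1, i2⟩ := t_bound_low hs4 hm1 hm2
    obtain ⟨i3, i4⟩ := t_bound_low hs4 hM1 hM2
    obtain ⟨i5, i6⟩ := t_bound_low hs4 hmp1 hmp2
    obtain ⟨i7, i8⟩ := t_bound_low hs4 hMp1 hMp2
    rcases slow hs4 hlow h3 hk (by omega) (by omega) with
      hu0 | ⟨hseq, hc⟩ | ⟨hseq, hc⟩ | ⟨hseq, hc⟩ | ⟨hseq, hc⟩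
    · -- u = 0 : look at v
      rcases slow hs4 hlow h3 hl (by omega) (by omega) with
        hv0 | ⟨hseq, hc⟩ | ⟨hseq, hc⟩ | ⟨hseq, hc⟩ | ⟨hseq, hc⟩
      · exact doneEq hu0 hv0
      · exfalso; rcases hc with ⟨hv, -⟩ | ⟨hv, -⟩ <;> omega
      · exfalso; rcases hc with ⟨hv, -⟩ | ⟨hv, -⟩ <;> omega
      · exfalso; rcases hc with ⟨hv, -⟩ | ⟨hv, -⟩ <;> omega
      · -- s = 3/8, v = ±8 : kill by the empty window for n
        exfalso
        rcases hc with ⟨hv, hlv⟩ | ⟨hv, hlv⟩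
        · -- v = 8 : m = -2, M = 2, m' = 2, M' = -2
          have hmv : m = -2 := by omega
          have hm'v : m' = 2 := by omega
          subst hmv; subst hm'v
          push_cast at a5 a6
          have j1 : (1:ℤ) < n := by
            exact_mod_cast (by linarith : (1:ℝ) < (n:ℝ))
          have j2 : n < 2 := by
            exact_mod_cast (by linarith : (n:ℝ) < 2)
          omega
        · -- v = -8 : m = 2, m' = -2
          have hmv : m = 2 := by omega
          have hm'v : m' = -2 := by omega
          subst hmv; subst hm'v
          push_cast at a5 a6
          have j1 : n < -1 := by
            exact_mod_cast (by linarith : (n:ℝ) < -1)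
          have j2 : (-2:ℤ) < n := by
            exact_mod_cast (by linarith : (-2:ℝ) < (n:ℝ))
          omega
    · -- s = 2/5 : 5 l = 2 v, kill by parity/size
      exfalso
      have hv52 : 5*(n - N) = 2*(M - M' - m + m') := by
        have : (5:ℝ)*((n - N : ℤ):ℝ) = 2*((M - M' - m + m' : ℤ):ℝ) := by
          rw [hl, hseq]; ring
        exact_mod_cast this
      rcases hc with ⟨hu, -⟩ | ⟨hu, -⟩ <;> omega
    · -- s = 2/7
      exfalso
      have hv72 : 7*(n - N) = 2*(M - M' - m + m') := by
        have : (7:ℝ)*((n - N : ℤ):ℝ) = 2*((M - M' - m + m' : ℤ):ℝ) := by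
          rw [hl, hseq]; ring
        exact_mod_cast this
      rcases hc with ⟨hu, -⟩ | ⟨hu, -⟩ <;> omega
    · -- s = 3/7
      exfalso
      have hv73 : 7*(n - N) = 3*(M - M' - m + m') := by
        have : (7:ℝ)*((n - N : ℤ):ℝ) = 3*((M - M' - m + m' : ℤ):ℝ) := by
          rw [hl, hseq]; ring
        exact_mod_cast this
      rcases hc with ⟨hu, -⟩ | ⟨hu, -⟩ <;> omega
    · -- s = 3/8, u = ±8 : residual kill via D2/D5 windows
      exfalso
      have hv83 : 8*(n - N) = 3*(M - M' - m + m') := by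
        have : (8:ℝ)*((n - N : ℤ):ℝ) = 3*((M - M' - m + m' : ℤ):ℝ) := by
          rw [hl, hseq]; ring
        exact_mod_cast this
      rcases hc with ⟨hu, hkv⟩ | ⟨hu, hkv⟩
      · -- u = 8, k = 3 : m = -2, M = 2, m' = -2, M' = 2, v = 0, l = 0
        have hv0 : M - M' - m + m' = 0 := by omega
        have hl0 : n - N = 0 := by omega
        have hmv : m = -2 := by omega
        have hMv : M = 2 := by omega
        have hm'v : m' = -2 := by omega
        have hM'v : M' = 2 := by omega
        subst hmv; subst hMv; subst hm'v; subst hM'v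
        push_cast at a3 a4 a5 a6 a7 a8 b3 b4 b7 b8
        have j0 : n = 0 := int_eq_of_cast_lt (by linarith) (by linarith)
        subst j0
        have jN : N = 0 := by omega
        subst jN
        push_cast at a3 a4 a7 a8 b3 b4 b7 b8
        have j1 : (-2:ℤ) < n' := by exact_mod_cast (by linarith : (-2:ℝ) < (n':ℝ))
        have j2 : n' < 2 := by exact_mod_cast (by linarith : (n':ℝ) < 2)
        have j3 : (-2:ℤ) < N' := by exact_mod_cast (by linarith : (-2:ℝ) < (N':ℝ))
        have j4 : N' < 2 := by exact_mod_cast (by linarith : (N':ℝ) < 2)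
        omega
      · -- u = -8, k = -3 : mirror
        have hv0 : M - M' - m + m' = 0 := by omega
        have hl0 : n - N = 0 := by omega
        have hmv : m = 2 := by omega
        have hMv : M = -2 := by omega
        have hm'v : m' = 2 := by omega
        have hM'v : M' = -2 := by omega
        subst hmv; subst hMv; subst hm'v; subst hM'v
        push_cast at a3 a4 a5 a6 a7 a8 b3 b4 b7 b8
        have j0 : n = 0 := int_eq_of_cast_lt (by linarith) (by linarith)
        subst j0
        have jN : N = 0 := by omega
        subst jN
        push_cast at a3 a4 a7 a8 b3 b4 b7 b8
        have j1 : (-2:ℤ) < n' := by exact_mod_cast (by linarith : (-2:ℝ) < (n':ℝ))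
        have j2 : n' < 2 := by exact_mod_cast (by linarith : (n':ℝ) < 2)
        have j3 : (-2:ℤ) < N' := by exact_mod_cast (by linarith : (-2:ℝ) < (N':ℝ))
        have j4 : N' < 2 := by exact_mod_cast (by linarith : (N':ℝ) < 2)
        omega
  · -- 1/2 < s < 1
    obtain ⟨i1, i2⟩ := t_bound_high hhigh hm1 hm2
    obtain ⟨i3, i4⟩ := t_bound_high hhigh hM1 hM2
    obtain ⟨i5, i6⟩ := t_bound_high hhigh hmp1 hmp2
    obtain ⟨i7, i8⟩ := t_bound_high hhigh hMp1 hMp2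
    rcases shigh hhigh hs1 hk (by omega) (by omega) with
      hu0 | ⟨hseq, hc⟩ | ⟨hseq, hc⟩
    · -- u = 0
      rcases shigh hhigh hs1 hl (by omega) (by omega) with
        hv0 | ⟨hseq, hc⟩ | ⟨hseq, hc⟩
      · exact doneEq hu0 hv0
      · exfalso; rcases hc with ⟨hv, -⟩ | ⟨hv, -⟩ <;> omega
      · -- s = 3/4, v = ±4 : residual kill H2
        exfalso
        have hk0 : n' - N' = 0 := by
          have hc0 : ((M + M' - m - m' : ℤ):ℝ) = 0 := by rw [hu0]; simp
          have : ((n' - N' : ℤ):ℝ) = 0 := by rw [hk, hc0, mul_zero]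
          exact_mod_cast this
        have hv43 : 4*(n - N) = 3*(M - M' - m + m') := by
          have : (4:ℝ)*((n - N : ℤ):ℝ) = 3*((M - M' - m + m' : ℤ):ℝ) := by
            rw [hl, hseq]; ring
          exact_mod_cast this
        rcases hc with ⟨hv, hlv⟩ | ⟨hv, hlv⟩
        · -- v = 4, l = 3 : m = -1, M = 1, m' = 1, M' = -1
          have hmv : m = -1 := by omega
          have hMv : M = 1 := by omega
          have hm'v : m' = 1 := by omega
          have hM'v : M' = -1 := by omega
          subst hmv; subst hMv; subst hm'v; subst hM'v
          push_cast at a1 a2 a5 a6 b1 b2 b5 b6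
          -- D2 windows
          have j1 : (0:ℤ) < n := by exact_mod_cast (by linarith : (0:ℝ) < (n:ℝ))
          have j2 : n < 3 := by exact_mod_cast (by linarith : (n:ℝ) < 3)
          have j3 : N < 0 := by exact_mod_cast (by linarith : (N:ℝ) < 0)
          have j4 : (-3:ℤ) < N := by exact_mod_cast (by linarith : (-3:ℝ) < (N:ℝ))
          -- D6 windows : n < 2 and N > -2
          have j5 : n < 2 := by exact_mod_cast (by linarith : (n:ℝ) < 2)
          have j6 : (-2:ℤ) < N := by exact_mod_cast (by linarith : (-2:ℝ) < (N:ℝ))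
          omega
        · -- v = -4, l = -3 : m = 1, M = -1, m' = -1, M' = 1
          have hmv : m = 1 := by omega
          have hMv : M = -1 := by omega
          have hm'v : m' = -1 := by omega
          have hM'v : M' = 1 := by omega
          subst hmv; subst hMv; subst hm'v; subst hM'v
          push_cast at a1 a2 a5 a6 b1 b2 b5 b6
          have j1 : n < 0 := by exact_mod_cast (by linarith : (n:ℝ) < 0)
          have j2 : (-3:ℤ) < n := by exact_mod_cast (by linarith : (-3:ℝ) < (n:ℝ))
          have j3 : (0:ℤ) < N := by exact_mod_cast (by linarith : (0:ℝ) < (N:ℝ))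
          have j4 : N < 3 := by exact_mod_cast (by linarith : (N:ℝ) < 3)
          have j5 : (-2:ℤ) < n := by exact_mod_cast (by linarith : (-2:ℝ) < (n:ℝ))
          have j6 : N < 2 := by exact_mod_cast (by linarith : (N:ℝ) < 2)
          omega
    · -- s = 2/3, u = ±3 : 3 l = 2 v, parity kill
      exfalso
      have hv32 : 3*(n - N) = 2*(M - M' - m + m') := by
        have : (3:ℝ)*((n - N : ℤ):ℝ) = 2*((M - M' - m + m' : ℤ):ℝ) := by
          rw [hl, hseq]; ring
        exact_mod_cast this
      rcases hc with ⟨hu, -⟩ | ⟨hu, -⟩ <;> omega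
    · -- s = 3/4, u = ±4 : residual kill H1
      exfalso
      have hv43 : 4*(n - N) = 3*(M - M' - m + m') := by
        have : (4:ℝ)*((n - N : ℤ):ℝ) = 3*((M - M' - m + m' : ℤ):ℝ) := by
          rw [hl, hseq]; ring
        exact_mod_cast this
      rcases hc with ⟨hu, hkv⟩ | ⟨hu, hkv⟩
      · -- u = 4, k = 3 : m = -1, M = 1, m' = -1, M' = 1, v = 0, l = 0
        have hv0 : M - M' - m + m' = 0 := by omega
        have hl0 : n - N = 0 := by omega
        have hmv : m = -1 := by omega
        have hMv : M = 1 := by omega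
        have hm'v : m' = -1 := by omega
        have hM'v : M' = 1 := by omega
        subst hmv; subst hMv; subst hm'v; subst hM'v
        push_cast at a3 a4 a5 a6 a7 a8 b3 b4 b7 b8
        have j0 : n = 0 := int_eq_of_cast_lt (by linarith) (by linarith)
        subst j0
        have jN : N = 0 := by omega
        subst jN
        push_cast at a3 a4 a7 a8 b3 b4 b7 b8
        have j1 : (-2:ℤ) < n' := by exact_mod_cast (by linarith : (-2:ℝ) < (n':ℝ))
        have j2 : n' < 2 := by exact_mod_cast (by linarith : (n':ℝ) < 2)
        have j3 : (-2:ℤ) < N' := by exact_mod_cast (by linarith : (-2:ℝ) < (N':ℝ))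
        have j4 : N' < 2 := by exact_mod_cast (by linarith : (N':ℝ) < 2)
        omega
      · -- u = -4, k = -3 : mirror
        have hv0 : M - M' - m + m' = 0 := by omega
        have hl0 : n - N = 0 := by omega
        have hmv : m = 1 := by omega
        have hMv : M = -1 := by omega
        have hm'v : m' = 1 := by omega
        have hM'v : M' = -1 := by omega
        subst hmv; subst hMv; subst hm'v; subst hM'v
        push_cast at a3 a4 a5 a6 a7 a8 b3 b4 b7 b8
        have j0 : n = 0 := int_eq_of_cast_lt (by linarith) (by linarith)
        subst j0
        have jN : N = 0 := by omega
        subst jN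
        push_cast at a3 a4 a7 a8 b3 b4 b7 b8
        have j1 : (-2:ℤ) < n' := by exact_mod_cast (by linarith : (-2:ℝ) < (n':ℝ))
        have j2 : n' < 2 := by exact_mod_cast (by linarith : (n':ℝ) < 2)
        have j3 : (-2:ℤ) < N' := by exact_mod_cast (by linarith : (-2:ℝ) < (N':ℝ))
        have j4 : N' < 2 := by exact_mod_cast (by linarith : (N':ℝ) < 2)
        omega

-- ### affine combination helper

lemma comb_affine {a b : ℝ} (hab : a + b = 1) (u1 u2 K : ℝ) :
    a*u1 + b*u2 + K = a*(u1 + K) + b*(u2 + K) := by linear_combination (-K) * hab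

lemma int_cast_zero_of_mul {s : ℝ} (hs : 0 < s) {k : ℤ} (h : 2*s*(k:ℝ) = 0) : k = 0 := by
  have : (k:ℝ) = 0 := by
    rcases mul_eq_zero.1 h with h' | h'
    · nlinarith
    · exact h'
  exact_mod_cast this

lemma int_eq_of_mul_eq {s : ℝ} (hs : 0 < s) {k l : ℤ} (h : 2*s*(k:ℝ) = 2*s*(l:ℝ)) : k = l := by
  have : 2*s*((k - l : ℤ):ℝ) = 0 := by push_cast; linarith
  have := int_cast_zero_of_mul hs this
  omega

end Sharpness


set_option maxHeartbeats 4000000 in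
/-- For `s ∈ [1/4,1]` with `s ∉ {1/4, 1/3, 1/2, 1}`, the system
`(Xₛ, fₛ)` is sharp: for every vector `V`, the set of points `p ∈ Xₛ` at which `fₛ` is
defined with `fₛ(p) = p + V` is convex. -/
theorem sharpness (s : ℝ) (hs : s ∈ Set.Icc (1/4 : ℝ) 1)
    (h4 : s ≠ 1/4) (h3 : s ≠ 1/3) (h2 : s ≠ 1/2) (h1 : s ≠ 1) :
    ∀ V : ℝ × ℝ, Convex ℝ {p : ℝ × ℝ | p ∈ F1 s ∧ fRel s p (p + V)} := by
  intro V
  have hs4 : 1/4 < s := lt_of_le_of_ne hs.1 (Ne.symm h4)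
  have hs1 : s < 1 := lt_of_le_of_ne hs.2 h1
  have hs0 : (0:ℝ) < s := by linarith
  intro p1 hp1 p2 hp2 a b ha hb hab
  simp only [Set.mem_setOf_eq] at hp1 hp2 ⊢
  rcases eq_or_lt_of_le ha with ha0 | ha'
  · have hb1 : b = 1 := by linarith
    have hq : a • p1 + b • p2 = p2 := by rw [← ha0, hb1, zero_smul, one_smul, zero_add]
    rw [hq]; exact hp2
  rcases eq_or_lt_of_le hb with hb0 | hb'
  · have ha1 : a = 1 := by linarith
    have hq : a • p1 + b • p2 = p1 := by rw [← hb0, ha1, zero_smul, one_smul, add_zero]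
    rw [hq]; exact hp1
  obtain ⟨hp1F, hf1⟩ := hp1
  obtain ⟨hp2F, hf2⟩ := hp2
  obtain ⟨c1, c2, c3, c4⟩ := (mem_F1_iff hs0).1 hp1F
  obtain ⟨d1, d2, d3, d4⟩ := (mem_F1_iff hs0).1 hp2F
  have hcomb1 : (a • p1 + b • p2).1 = a * p1.1 + b * p2.1 := by
    simp [smul_eq_mul]
  have hcomb2 : (a • p1 + b • p2).2 = a * p1.2 + b * p2.2 := by
    simp [smul_eq_mul]
  have hqF1 : a • p1 + b • p2 ∈ F1 s := by
    rw [mem_F1_iff hs0, hcomb1, hcomb2]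
    refine ⟨?_, ?_, ?_, ?_⟩
    · linarith [comb_ge ha hb hab c1 d1]
    · linarith [comb_le ha hb hab c2 d2]
    · linarith [comb_ge ha hb hab c3 d3]
    · linarith [comb_le ha hb hab c4 d4]
  refine ⟨hqF1, ?_⟩
  rw [fRel_char hs0 hqF1, hcomb1, hcomb2]
  rw [fRel_char hs0 hp1F] at hf1
  rw [fRel_char hs0 hp2F] at hf2
  rcases hf1 with ⟨m, n, m', n', e1, e2, a1, a2, a3, a4, a5, a6, a7, a8⟩ |
    ⟨m, n, e1, e2, a1, a2, a3, a4, a5, a6, a7, a8⟩ |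
    ⟨g1, g2, g3, g4, g5, g6, g7, g8, m, n, e1, e2, a1, a2, a3, a4⟩ |
    ⟨hV0, g1, g2, g3, g4, g5, g6, g7, g8⟩
  · -- p1 : AB
    rcases hf2 with ⟨M, Nn, M', N', f1, f2, b1, b2, b3, b4, b5, b6, b7, b8⟩ |
      ⟨M, Nn, f1, f2, b1, b2, b3, b4, b5, b6, b7, b8⟩ |
      ⟨k1, k2, k3, k4, k5, k6, k7, k8, M, Nn, f1, f2, b1, b2, b3, b4⟩ |
      ⟨hV0, k1, k2, k3, k4, k5, k6, k7, k8⟩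
    · -- AB × AB : rigidity
      have E1 : 2*(n':ℝ) + 2*s*m + 2*s*m' = 2*(N':ℝ) + 2*s*M + 2*s*M' := by
        rw [← e1, ← f1]
      have E2 : 2*(n:ℝ) + 2*s*m - 2*s*m' = 2*(Nn:ℝ) + 2*s*M - 2*s*M' := by
        rw [← e2, ← f2]
      obtain ⟨hmM, hnN, hm'M', hn'N'⟩ := rigidity hs4 hs1 h3 h2 c1 c2 c3 c4 d1 d2 d3 d4
        a1 a2 a3 a4 a5 a6 a7 a8 b1 b2 b3 b4 b5 b6 b7 b8 E1 E2
      subst hmM; subst hnN; subst hm'M'; subst hn'N'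
      refine Or.inl ⟨m, n, m', n', e1, e2, ?_, ?_, ?_, ?_, ?_, ?_, ?_, ?_⟩
      · linarith [comb_gt_l ha' hb'.le hab a1 b1.le,
          comb_affine hab p1.1 p2.1 (2*s*(m:ℝ))]
      · linarith [comb_lt_l ha' hb'.le hab a2 b2.le,
          comb_affine hab p1.1 p2.1 (2*s*(m:ℝ))]
      · linarith [comb_gt_l ha' hb'.le hab a3 b3.le,
          comb_affine hab (p1.1+p1.2) (p2.1+p2.2) (4*s*(m:ℝ)+2*(n:ℝ))]
      · linarith [comb_lt_l ha' hb'.le hab a4 b4.le,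
          comb_affine hab (p1.1+p1.2) (p2.1+p2.2) (4*s*(m:ℝ)+2*(n:ℝ))]
      · linarith [comb_gt_l ha' hb'.le hab a5 b5.le,
          comb_affine hab p1.2 p2.2 (2*(n:ℝ)+2*s*(m:ℝ)-2*s*(m':ℝ))]
      · linarith [comb_lt_l ha' hb'.le hab a6 b6.le,
          comb_affine hab p1.2 p2.2 (2*(n:ℝ)+2*s*(m:ℝ)-2*s*(m':ℝ))]
      · linarith [comb_gt_l ha' hb'.le hab a7 b7.le,
          comb_affine hab (p1.1-p1.2) (p2.1-p2.2) (-2*(n:ℝ)+2*(n':ℝ)+4*s*(m':ℝ))]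
      · linarith [comb_lt_l ha' hb'.le hab a8 b8.le,
          comb_affine hab (p1.1-p1.2) (p2.1-p2.2) (-2*(n:ℝ)+2*(n':ℝ)+4*s*(m':ℝ))]
    · -- AB × AA : gap forces m' = n' = 0
      have hV2L1 : ((2*(n':ℝ) + 2*s*(m':ℝ), -(2*s*(m':ℝ))) : ℝ×ℝ) ∈ L1 s :=
        mem_L1_iff.2 ⟨m', n', rfl⟩
      have hVL2 : V ∈ L2 s := by
        have : V = ((2*s*(M:ℝ), 2*(Nn:ℝ)+2*s*(M:ℝ)) : ℝ×ℝ) := by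
          ext
          · exact f1
          · exact f2
        rw [this]; exact mem_L2_iff.2 ⟨M, Nn, rfl⟩
      have hV1L2 : ((2*s*(m:ℝ), 2*(n:ℝ)+2*s*(m:ℝ)) : ℝ×ℝ) ∈ L2 s := mem_L2_iff.2 ⟨m, n, rfl⟩
      have hV2eq : ((2*(n':ℝ) + 2*s*(m':ℝ), -(2*s*(m':ℝ))) : ℝ×ℝ)
          = V - ((2*s*(m:ℝ), 2*(n:ℝ)+2*s*(m:ℝ)) : ℝ×ℝ) := by
        ext
        · simp only [Prod.fst_sub]; linarith [e1]
        · simp only [Prod.snd_sub]; linarith [e2]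
      have hV2L2 : ((2*(n':ℝ) + 2*s*(m':ℝ), -(2*s*(m':ℝ))) : ℝ×ℝ) ∈ L2 s := by
        rw [hV2eq]; exact AddSubgroup.sub_mem _ hVL2 hV1L2
      have hgap := gap hs4 hs1 h3 h2 hV2L1 hV2L2
        (by simp only; linarith) (by simp only; linarith)
        (by simp only; linarith) (by simp only; linarith)
      have hm'0 : m' = 0 := by
        have := congrArg Prod.snd hgap
        simp only [Prod.snd_zero] at this
        exact int_cast_zero_of_mul hs0 (by linarith)
      subst hm'0
      have hn'0 : n' = 0 := by
        have := congrArg Prod.fst hgap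
        simp only [Prod.fst_zero] at this
        push_cast at this
        exact_mod_cast (by linarith : (n':ℝ) = 0)
      subst hn'0
      push_cast at e1 e2 a5 a6 a7 a8
      have hmM : m = M := int_eq_of_mul_eq hs0 (by linarith [e1, f1])
      subst hmM
      have hnN : n = Nn := by
        have : (n:ℝ) = (Nn:ℝ) := by linarith [e2, f2]
        exact_mod_cast this
      subst hnN
      refine Or.inl ⟨m, n, 0, 0, by push_cast; linarith [e1], by push_cast; linarith [e2],
        ?_, ?_, ?_, ?_, ?_, ?_, ?_, ?_⟩
      · linarith [comb_gt_l ha' hb'.le hab a1 b1.le,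
          comb_affine hab p1.1 p2.1 (2*s*(m:ℝ))]
      · linarith [comb_lt_l ha' hb'.le hab a2 b2.le,
          comb_affine hab p1.1 p2.1 (2*s*(m:ℝ))]
      · linarith [comb_gt_l ha' hb'.le hab a3 b3.le,
          comb_affine hab (p1.1+p1.2) (p2.1+p2.2) (4*s*(m:ℝ)+2*(n:ℝ))]
      · linarith [comb_lt_l ha' hb'.le hab a4 b4.le,
          comb_affine hab (p1.1+p1.2) (p2.1+p2.2) (4*s*(m:ℝ)+2*(n:ℝ))]
      · push_cast
        linarith [comb_gt_l ha' hb'.le hab a5 b5,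
          comb_affine hab p1.2 p2.2 (2*(n:ℝ)+2*s*(m:ℝ))]
      · push_cast
        linarith [comb_lt_l ha' hb'.le hab a6 b6,
          comb_affine hab p1.2 p2.2 (2*(n:ℝ)+2*s*(m:ℝ))]
      · push_cast
        linarith [comb_gt_l ha' hb'.le hab a7 b7,
          comb_affine hab (p1.1-p1.2) (p2.1-p2.2) (-2*(n:ℝ))]
      · push_cast
        linarith [comb_lt_l ha' hb'.le hab a8 b8,
          comb_affine hab (p1.1-p1.2) (p2.1-p2.2) (-2*(n:ℝ))]
    · -- AB × BA : everything collapses to zero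
      have hM0 : M = 0 := by
        apply int_zero_of_mul hs0 (k := M) <;> linarith
      subst hM0
      -- V ∈ L2, gap on the L1 part of the AB chain
      have hV2L1 : ((2*(n':ℝ) + 2*s*(m':ℝ), -(2*s*(m':ℝ))) : ℝ×ℝ) ∈ L1 s :=
        mem_L1_iff.2 ⟨m', n', rfl⟩
      have hVL2 : V ∈ L2 s := by
        have : V = ((2*s*((0:ℤ):ℝ), 2*(Nn:ℝ)+2*s*((0:ℤ):ℝ)) : ℝ×ℝ) := by
          ext
          · exact f1
          · exact f2
        rw [this]; exact mem_L2_iff.2 ⟨0, Nn, rfl⟩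
      have hV1L2 : ((2*s*(m:ℝ), 2*(n:ℝ)+2*s*(m:ℝ)) : ℝ×ℝ) ∈ L2 s := mem_L2_iff.2 ⟨m, n, rfl⟩
      have hV2eq : ((2*(n':ℝ) + 2*s*(m':ℝ), -(2*s*(m':ℝ))) : ℝ×ℝ)
          = V - ((2*s*(m:ℝ), 2*(n:ℝ)+2*s*(m:ℝ)) : ℝ×ℝ) := by
        ext
        · simp only [Prod.fst_sub]; linarith [e1]
        · simp only [Prod.snd_sub]; linarith [e2]
      have hV2L2 : ((2*(n':ℝ) + 2*s*(m':ℝ), -(2*s*(m':ℝ))) : ℝ×ℝ) ∈ L2 s := by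
        rw [hV2eq]; exact AddSubgroup.sub_mem _ hVL2 hV1L2
      have hgap := gap hs4 hs1 h3 h2 hV2L1 hV2L2
        (by simp only; linarith) (by simp only; linarith)
        (by simp only; linarith) (by simp only; linarith)
      have hm'0 : m' = 0 := by
        have := congrArg Prod.snd hgap
        simp only [Prod.snd_zero] at this
        exact int_cast_zero_of_mul hs0 (by linarith)
      subst hm'0
      have hn'0 : n' = 0 := by
        have := congrArg Prod.fst hgap
        simp only [Prod.fst_zero] at this
        push_cast at this
        exact_mod_cast (by linarith : (n':ℝ) = 0)
      subst hn'0
      push_cast at e1 e2 f1 f2 a1 a2 a3 a4 a5 a6 a7 a8 b1 b2 b3 b4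
      have hm0 : m = 0 := int_cast_zero_of_mul hs0 (by linarith [e1, f1])
      subst hm0
      push_cast at a1 a2 a3 a4 a5 a6 a7 a8
      have hn0 : n = 0 := by
        apply int_eq_of_cast_lt (k := n) <;> nlinarith [a5, a6, c1, c2, hs1]
      subst hn0
      push_cast at a3 a4 a7 a8 e2
      have hNn0 : Nn = 0 := by
        have : (Nn:ℝ) = 0 := by linarith [e2, f2]
        exact_mod_cast this
      subst hNn0
      push_cast at a1 a2 a3 a4 a5 a6 a7 a8 b1 b2 b3 b4 e1 e2 f1 f2
      refine Or.inl ⟨0, 0, 0, 0, by push_cast; linarith [e1], by push_cast; linarith [e2],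
        ?_, ?_, ?_, ?_, ?_, ?_, ?_, ?_⟩ <;> push_cast
      · linarith [comb_gt_l ha' hb'.le hab a1 b1.le]
      · linarith [comb_lt_l ha' hb'.le hab a2 b2.le]
      · linarith [comb_gt_l ha' hb'.le hab a3 b3.le]
      · linarith [comb_lt_l ha' hb'.le hab a4 b4.le]
      · linarith [comb_gt_l ha' hb'.le hab a5 k5.le]
      · linarith [comb_lt_l ha' hb'.le hab a6 k6.le]
      · linarith [comb_gt_l ha' hb'.le hab a7 k7.le]
      · linarith [comb_lt_l ha' hb'.le hab a8 k8.le]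
    · -- AB × BB : V = 0, everything collapses
      subst hV0
      simp only [Prod.fst_zero, Prod.snd_zero] at e1 e2
      have hV1L2 : ((2*s*(m:ℝ), 2*(n:ℝ)+2*s*(m:ℝ)) : ℝ×ℝ) ∈ L2 s := mem_L2_iff.2 ⟨m, n, rfl⟩
      have hV1L1 : ((2*s*(m:ℝ), 2*(n:ℝ)+2*s*(m:ℝ)) : ℝ×ℝ) ∈ L1 s := by
        have hneg : ((2*s*(m:ℝ), 2*(n:ℝ)+2*s*(m:ℝ)) : ℝ×ℝ)
            = -(((2*(n':ℝ) + 2*s*(m':ℝ), -(2*s*(m':ℝ))) : ℝ×ℝ)) := by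
          ext
          · simp only [Prod.fst_neg]; linarith [e1]
          · simp only [Prod.snd_neg]; linarith [e2]
        rw [hneg]
        exact AddSubgroup.neg_mem _ (mem_L1_iff.2 ⟨m', n', rfl⟩)
      have hgap := gap hs4 hs1 h3 h2 hV1L1 hV1L2
        (by simp only; linarith) (by simp only; linarith)
        (by simp only; linarith) (by simp only; linarith)
      have hm0 : m = 0 := by
        have := congrArg Prod.fst hgap
        simp only [Prod.fst_zero] at this
        exact int_cast_zero_of_mul hs0 (by linarith)
      subst hm0
      have hn0 : n = 0 := by
        have := congrArg Prod.snd hgap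
        simp only [Prod.snd_zero] at this
        push_cast at this
        exact_mod_cast (by linarith : (n:ℝ) = 0)
      subst hn0
      push_cast at e1 e2 a1 a2 a3 a4 a5 a6 a7 a8
      have hm'0 : m' = 0 := int_cast_zero_of_mul hs0 (by linarith [e2])
      subst hm'0
      push_cast at e1 e2 a1 a2 a3 a4 a5 a6 a7 a8
      have hn'0 : n' = 0 := by
        exact_mod_cast (by linarith [e1] : (n':ℝ) = 0)
      subst hn'0
      push_cast at a1 a2 a3 a4 a5 a6 a7 a8
      refine Or.inl ⟨0, 0, 0, 0, by push_cast; simp, by push_cast; simp,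
        ?_, ?_, ?_, ?_, ?_, ?_, ?_, ?_⟩ <;> push_cast
      · linarith [comb_gt_l ha' hb'.le hab a1 k1]
      · linarith [comb_lt_l ha' hb'.le hab a2 k2]
      · linarith [comb_gt_l ha' hb'.le hab a3 k3]
      · linarith [comb_lt_l ha' hb'.le hab a4 k4]
      · linarith [comb_gt_l ha' hb'.le hab a5 k5.le]
      · linarith [comb_lt_l ha' hb'.le hab a6 k6.le]
      · linarith [comb_gt_l ha' hb'.le hab a7 k7.le]
      · linarith [comb_lt_l ha' hb'.le hab a8 k8.le]
  · -- p1 : AA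
    rcases hf2 with ⟨M, Nn, M', N', f1, f2, b1, b2, b3, b4, b5, b6, b7, b8⟩ |
      ⟨M, Nn, f1, f2, b1, b2, b3, b4, b5, b6, b7, b8⟩ |
      ⟨k1, k2, k3, k4, k5, k6, k7, k8, M, Nn, f1, f2, b1, b2, b3, b4⟩ |
      ⟨hV0, k1, k2, k3, k4, k5, k6, k7, k8⟩
    · -- AA × AB : gap forces M' = N' = 0 (mirror of AB × AA)
      have hV2L1 : ((2*(N':ℝ) + 2*s*(M':ℝ), -(2*s*(M':ℝ))) : ℝ×ℝ) ∈ L1 s :=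
        mem_L1_iff.2 ⟨M', N', rfl⟩
      have hVL2 : V ∈ L2 s := by
        have : V = ((2*s*(m:ℝ), 2*(n:ℝ)+2*s*(m:ℝ)) : ℝ×ℝ) := by
          ext
          · exact e1
          · exact e2
        rw [this]; exact mem_L2_iff.2 ⟨m, n, rfl⟩
      have hV1L2 : ((2*s*(M:ℝ), 2*(Nn:ℝ)+2*s*(M:ℝ)) : ℝ×ℝ) ∈ L2 s := mem_L2_iff.2 ⟨M, Nn, rfl⟩
      have hV2eq : ((2*(N':ℝ) + 2*s*(M':ℝ), -(2*s*(M':ℝ))) : ℝ×ℝ)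
          = V - ((2*s*(M:ℝ), 2*(Nn:ℝ)+2*s*(M:ℝ)) : ℝ×ℝ) := by
        ext
        · simp only [Prod.fst_sub]; linarith [f1]
        · simp only [Prod.snd_sub]; linarith [f2]
      have hV2L2 : ((2*(N':ℝ) + 2*s*(M':ℝ), -(2*s*(M':ℝ))) : ℝ×ℝ) ∈ L2 s := by
        rw [hV2eq]; exact AddSubgroup.sub_mem _ hVL2 hV1L2
      have hgap := gap hs4 hs1 h3 h2 hV2L1 hV2L2
        (by simp only; linarith) (by simp only; linarith)
        (by simp only; linarith) (by simp only; linarith)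
      have hM'0 : M' = 0 := by
        have := congrArg Prod.snd hgap
        simp only [Prod.snd_zero] at this
        exact int_cast_zero_of_mul hs0 (by linarith)
      subst hM'0
      have hN'0 : N' = 0 := by
        have := congrArg Prod.fst hgap
        simp only [Prod.fst_zero] at this
        push_cast at this
        exact_mod_cast (by linarith : (N':ℝ) = 0)
      subst hN'0
      push_cast at f1 f2 b5 b6 b7 b8
      have hmM : m = M := int_eq_of_mul_eq hs0 (by linarith [e1, f1])
      subst hmM
      have hnN : n = Nn := by
        have : (n:ℝ) = (Nn:ℝ) := by linarith [e2, f2]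
        exact_mod_cast this
      subst hnN
      refine Or.inl ⟨m, n, 0, 0, by push_cast; linarith [e1], by push_cast; linarith [e2],
        ?_, ?_, ?_, ?_, ?_, ?_, ?_, ?_⟩
      · linarith [comb_gt_l ha' hb'.le hab a1 b1.le,
          comb_affine hab p1.1 p2.1 (2*s*(m:ℝ))]
      · linarith [comb_lt_l ha' hb'.le hab a2 b2.le,
          comb_affine hab p1.1 p2.1 (2*s*(m:ℝ))]
      · linarith [comb_gt_l ha' hb'.le hab a3 b3.le,
          comb_affine hab (p1.1+p1.2) (p2.1+p2.2) (4*s*(m:ℝ)+2*(n:ℝ))]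
      · linarith [comb_lt_l ha' hb'.le hab a4 b4.le,
          comb_affine hab (p1.1+p1.2) (p2.1+p2.2) (4*s*(m:ℝ)+2*(n:ℝ))]
      · push_cast
        linarith [comb_gt_r ha'.le hb' hab a5 b5,
          comb_affine hab p1.2 p2.2 (2*(n:ℝ)+2*s*(m:ℝ))]
      · push_cast
        linarith [comb_lt_r ha'.le hb' hab a6 b6,
          comb_affine hab p1.2 p2.2 (2*(n:ℝ)+2*s*(m:ℝ))]
      · push_cast
        linarith [comb_gt_r ha'.le hb' hab a7 b7,
          comb_affine hab (p1.1-p1.2) (p2.1-p2.2) (-2*(n:ℝ))]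
      · push_cast
        linarith [comb_lt_r ha'.le hb' hab a8 b8,
          comb_affine hab (p1.1-p1.2) (p2.1-p2.2) (-2*(n:ℝ))]
    · -- AA × AA : same data
      have hmM : m = M := int_eq_of_mul_eq hs0 (by linarith [e1, f1])
      subst hmM
      have hnN : n = Nn := by
        have : (n:ℝ) = (Nn:ℝ) := by linarith [e2, f2]
        exact_mod_cast this
      subst hnN
      refine Or.inr (Or.inl ⟨m, n, e1, e2, ?_, ?_, ?_, ?_, ?_, ?_, ?_, ?_⟩)
      · linarith [comb_gt_l ha' hb'.le hab a1 b1.le,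
          comb_affine hab p1.1 p2.1 (2*s*(m:ℝ))]
      · linarith [comb_lt_l ha' hb'.le hab a2 b2.le,
          comb_affine hab p1.1 p2.1 (2*s*(m:ℝ))]
      · linarith [comb_gt_l ha' hb'.le hab a3 b3.le,
          comb_affine hab (p1.1+p1.2) (p2.1+p2.2) (4*s*(m:ℝ)+2*(n:ℝ))]
      · linarith [comb_lt_l ha' hb'.le hab a4 b4.le,
          comb_affine hab (p1.1+p1.2) (p2.1+p2.2) (4*s*(m:ℝ)+2*(n:ℝ))]
      · linarith [comb_ge ha hb hab a5 b5,
          comb_affine hab p1.2 p2.2 (2*(n:ℝ)+2*s*(m:ℝ))]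
      · linarith [comb_le ha hb hab a6 b6,
          comb_affine hab p1.2 p2.2 (2*(n:ℝ)+2*s*(m:ℝ))]
      · linarith [comb_ge ha hb hab a7 b7,
          comb_affine hab (p1.1-p1.2) (p2.1-p2.2) (-2*(n:ℝ))]
      · linarith [comb_le ha hb hab a8 b8,
          comb_affine hab (p1.1-p1.2) (p2.1-p2.2) (-2*(n:ℝ))]
    · -- AA × BA : everything collapses to zero
      have hM0 : M = 0 := by
        apply int_zero_of_mul hs0 (k := M) <;> linarith
      subst hM0
      push_cast at f1 f2 b1 b2 b3 b4
      have hm0 : m = 0 := int_cast_zero_of_mul hs0 (by linarith [e1, f1])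
      subst hm0
      push_cast at a1 a2 a3 a4 a5 a6 e1 e2
      have hn0 : n = 0 := by
        apply int_eq_of_cast_lt (k := n) <;> nlinarith [a5, a6, c1, c2, hs1]
      subst hn0
      push_cast at a3 a4 a5 a6 a7 a8 e2
      have hNn0 : Nn = 0 := by
        have : (Nn:ℝ) = 0 := by linarith [e2, f2]
        exact_mod_cast this
      subst hNn0
      push_cast at f2 b3 b4
      refine Or.inr (Or.inl ⟨0, 0, by push_cast; linarith [e1], by push_cast; linarith [e2],
        ?_, ?_, ?_, ?_, ?_, ?_, ?_, ?_⟩) <;> push_cast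
      · linarith [comb_gt_l ha' hb'.le hab a1 b1.le]
      · linarith [comb_lt_l ha' hb'.le hab a2 b2.le]
      · linarith [comb_gt_l ha' hb'.le hab a3 b3.le]
      · linarith [comb_lt_l ha' hb'.le hab a4 b4.le]
      · linarith [comb_ge ha hb hab a5 k5.le]
      · linarith [comb_le ha hb hab a6 k6.le]
      · linarith [comb_ge ha hb hab a7 k7.le]
      · linarith [comb_le ha hb hab a8 k8.le]
    · -- AA × BB : V = 0
      subst hV0
      simp only [Prod.fst_zero, Prod.snd_zero] at e1 e2
      have hm0 : m = 0 := int_cast_zero_of_mul hs0 (by linarith [e1])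
      subst hm0
      push_cast at e1 e2 a1 a2 a3 a4 a5 a6 a7 a8
      have hn0 : n = 0 := by
        exact_mod_cast (by linarith [e2] : (n:ℝ) = 0)
      subst hn0
      push_cast at a3 a4 a5 a6 a7 a8
      refine Or.inr (Or.inl ⟨0, 0, by simp, by simp, ?_, ?_, ?_, ?_, ?_, ?_, ?_, ?_⟩) <;>
        push_cast
      · linarith [comb_gt_l ha' hb'.le hab a1 k1]
      · linarith [comb_lt_l ha' hb'.le hab a2 k2]
      · linarith [comb_gt_l ha' hb'.le hab a3 k3]
      · linarith [comb_lt_l ha' hb'.le hab a4 k4]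
      · linarith [comb_ge ha hb hab a5 k5.le]
      · linarith [comb_le ha hb hab a6 k6.le]
      · linarith [comb_ge ha hb hab a7 k7.le]
      · linarith [comb_le ha hb hab a8 k8.le]
  · -- p1 : BA
    rcases hf2 with ⟨M, Nn, M', N', f1, f2, b1, b2, b3, b4, b5, b6, b7, b8⟩ |
      ⟨M, Nn, f1, f2, b1, b2, b3, b4, b5, b6, b7, b8⟩ |
      ⟨k1, k2, k3, k4, k5, k6, k7, k8, M, Nn, f1, f2, b1, b2, b3, b4⟩ |
      ⟨hV0, k1, k2, k3, k4, k5, k6, k7, k8⟩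
    · -- BA × AB : everything collapses to zero (mirror of AB × BA)
      have hm0 : m = 0 := by
        apply int_zero_of_mul hs0 (k := m) <;> linarith
      subst hm0
      have hV2L1 : ((2*(N':ℝ) + 2*s*(M':ℝ), -(2*s*(M':ℝ))) : ℝ×ℝ) ∈ L1 s :=
        mem_L1_iff.2 ⟨M', N', rfl⟩
      have hVL2 : V ∈ L2 s := by
        have : V = ((2*s*((0:ℤ):ℝ), 2*(n:ℝ)+2*s*((0:ℤ):ℝ)) : ℝ×ℝ) := by
          ext
          · exact e1
          · exact e2
        rw [this]; exact mem_L2_iff.2 ⟨0, n, rfl⟩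
      have hV1L2 : ((2*s*(M:ℝ), 2*(Nn:ℝ)+2*s*(M:ℝ)) : ℝ×ℝ) ∈ L2 s := mem_L2_iff.2 ⟨M, Nn, rfl⟩
      have hV2eq : ((2*(N':ℝ) + 2*s*(M':ℝ), -(2*s*(M':ℝ))) : ℝ×ℝ)
          = V - ((2*s*(M:ℝ), 2*(Nn:ℝ)+2*s*(M:ℝ)) : ℝ×ℝ) := by
        ext
        · simp only [Prod.fst_sub]; linarith [f1]
        · simp only [Prod.snd_sub]; linarith [f2]
      have hV2L2 : ((2*(N':ℝ) + 2*s*(M':ℝ), -(2*s*(M':ℝ))) : ℝ×ℝ) ∈ L2 s := by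
        rw [hV2eq]; exact AddSubgroup.sub_mem _ hVL2 hV1L2
      have hgap := gap hs4 hs1 h3 h2 hV2L1 hV2L2
        (by simp only; linarith) (by simp only; linarith)
        (by simp only; linarith) (by simp only; linarith)
      have hM'0 : M' = 0 := by
        have := congrArg Prod.snd hgap
        simp only [Prod.snd_zero] at this
        exact int_cast_zero_of_mul hs0 (by linarith)
      subst hM'0
      have hN'0 : N' = 0 := by
        have := congrArg Prod.fst hgap
        simp only [Prod.fst_zero] at this
        push_cast at this
        exact_mod_cast (by linarith : (N':ℝ) = 0)
      subst hN'0
      push_cast at e1 e2 f1 f2 b1 b2 b3 b4 b5 b6 b7 b8 a1 a2 a3 a4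
      have hM0 : M = 0 := int_cast_zero_of_mul hs0 (by linarith [e1, f1])
      subst hM0
      push_cast at f1 f2 b1 b2 b3 b4 b5 b6 b7 b8
      have hNn0 : Nn = 0 := by
        apply int_eq_of_cast_lt (k := Nn) <;> nlinarith [b5, b6, d1, d2, hs1]
      subst hNn0
      push_cast at f2 b3 b4 b5 b6 b7 b8
      have hn0 : n = 0 := by
        have : (n:ℝ) = 0 := by linarith [e2, f2]
        exact_mod_cast this
      subst hn0
      push_cast at e1 e2 a3 a4
      refine Or.inl ⟨0, 0, 0, 0, by push_cast; linarith [e1], by push_cast; linarith [e2],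
        ?_, ?_, ?_, ?_, ?_, ?_, ?_, ?_⟩ <;> push_cast
      · linarith [comb_gt_l ha' hb'.le hab a1 b1.le]
      · linarith [comb_lt_l ha' hb'.le hab a2 b2.le]
      · linarith [comb_gt_l ha' hb'.le hab a3 b3.le]
      · linarith [comb_lt_l ha' hb'.le hab a4 b4.le]
      · linarith [comb_gt_l ha' hb'.le hab g5 b5.le]
      · linarith [comb_lt_l ha' hb'.le hab g6 b6.le]
      · linarith [comb_gt_l ha' hb'.le hab g7 b7.le]
      · linarith [comb_lt_l ha' hb'.le hab g8 b8.le]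
    · -- BA × AA : everything collapses to zero (mirror of AA × BA)
      have hm0 : m = 0 := by
        apply int_zero_of_mul hs0 (k := m) <;> linarith
      subst hm0
      push_cast at e1 e2 a1 a2 a3 a4
      have hM0 : M = 0 := int_cast_zero_of_mul hs0 (by linarith [e1, f1])
      subst hM0
      push_cast at f1 f2 b1 b2 b3 b4 b5 b6
      have hNn0 : Nn = 0 := by
        apply int_eq_of_cast_lt (k := Nn) <;> nlinarith [b5, b6, d1, d2, hs1]
      subst hNn0
      push_cast at f2 b3 b4 b5 b6 b7 b8
      have hn0 : n = 0 := by
        have : (n:ℝ) = 0 := by linarith [e2, f2]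
        exact_mod_cast this
      subst hn0
      push_cast at e2 a3 a4
      refine Or.inr (Or.inl ⟨0, 0, by push_cast; linarith [e1], by push_cast; linarith [e2],
        ?_, ?_, ?_, ?_, ?_, ?_, ?_, ?_⟩) <;> push_cast
      · linarith [comb_gt_l ha' hb'.le hab a1 b1.le]
      · linarith [comb_lt_l ha' hb'.le hab a2 b2.le]
      · linarith [comb_gt_l ha' hb'.le hab a3 b3.le]
      · linarith [comb_lt_l ha' hb'.le hab a4 b4.le]
      · linarith [comb_ge ha hb hab g5.le b5]
      · linarith [comb_le ha hb hab g6.le b6]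
      · linarith [comb_ge ha hb hab g7.le b7]
      · linarith [comb_le ha hb hab g8.le b8]
    · -- BA × BA : same data
      have hmM : m = M := int_eq_of_mul_eq hs0 (by linarith [e1, f1])
      subst hmM
      have hnN : n = Nn := by
        have : (n:ℝ) = (Nn:ℝ) := by linarith [e2, f2]
        exact_mod_cast this
      subst hnN
      refine Or.inr (Or.inr (Or.inl ⟨?_, ?_, ?_, ?_, ?_, ?_, ?_, ?_, m, n, e1, e2,
        ?_, ?_, ?_, ?_⟩))
      · linarith [comb_ge ha hb hab g1 k1]
      · linarith [comb_le ha hb hab g2 k2]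
      · linarith [comb_ge ha hb hab g3 k3]
      · linarith [comb_le ha hb hab g4 k4]
      · linarith [comb_gt_l ha' hb'.le hab g5 k5.le]
      · linarith [comb_lt_l ha' hb'.le hab g6 k6.le]
      · linarith [comb_gt_l ha' hb'.le hab g7 k7.le]
      · linarith [comb_lt_l ha' hb'.le hab g8 k8.le]
      · linarith [comb_gt_l ha' hb'.le hab a1 b1.le,
          comb_affine hab p1.1 p2.1 (2*s*(m:ℝ))]
      · linarith [comb_lt_l ha' hb'.le hab a2 b2.le,
          comb_affine hab p1.1 p2.1 (2*s*(m:ℝ))]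
      · linarith [comb_gt_l ha' hb'.le hab a3 b3.le,
          comb_affine hab (p1.1+p1.2) (p2.1+p2.2) (4*s*(m:ℝ)+2*(n:ℝ))]
      · linarith [comb_lt_l ha' hb'.le hab a4 b4.le,
          comb_affine hab (p1.1+p1.2) (p2.1+p2.2) (4*s*(m:ℝ)+2*(n:ℝ))]
    · -- BA × BB : V = 0
      subst hV0
      simp only [Prod.fst_zero, Prod.snd_zero] at e1 e2
      have hm0 : m = 0 := int_cast_zero_of_mul hs0 (by linarith [e1])
      subst hm0
      push_cast at e1 e2 a1 a2 a3 a4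
      have hn0 : n = 0 := by
        exact_mod_cast (by linarith [e2] : (n:ℝ) = 0)
      subst hn0
      push_cast at a3 a4
      refine Or.inr (Or.inr (Or.inl ⟨?_, ?_, ?_, ?_, ?_, ?_, ?_, ?_, 0, 0, by simp, by simp,
        ?_, ?_, ?_, ?_⟩)) <;> push_cast
      · linarith [comb_ge ha hb hab g1 k1]
      · linarith [comb_le ha hb hab g2 k2]
      · linarith [comb_ge ha hb hab g3 k3]
      · linarith [comb_le ha hb hab g4 k4]
      · linarith [comb_gt_l ha' hb'.le hab g5 k5.le]
      · linarith [comb_lt_l ha' hb'.le hab g6 k6.le]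
      · linarith [comb_gt_l ha' hb'.le hab g7 k7.le]
      · linarith [comb_lt_l ha' hb'.le hab g8 k8.le]
      · linarith [comb_gt_l ha' hb'.le hab a1 k1]
      · linarith [comb_lt_l ha' hb'.le hab a2 k2]
      · linarith [comb_gt_l ha' hb'.le hab a3 k3]
      · linarith [comb_lt_l ha' hb'.le hab a4 k4]
  · -- p1 : BB
    subst hV0
    rcases hf2 with ⟨M, Nn, M', N', f1, f2, b1, b2, b3, b4, b5, b6, b7, b8⟩ |
      ⟨M, Nn, f1, f2, b1, b2, b3, b4, b5, b6, b7, b8⟩ |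
      ⟨k1, k2, k3, k4, k5, k6, k7, k8, M, Nn, f1, f2, b1, b2, b3, b4⟩ |
      ⟨-, k1, k2, k3, k4, k5, k6, k7, k8⟩
    · -- BB × AB : mirror of AB × BB
      simp only [Prod.fst_zero, Prod.snd_zero] at f1 f2
      have hV1L2 : ((2*s*(M:ℝ), 2*(Nn:ℝ)+2*s*(M:ℝ)) : ℝ×ℝ) ∈ L2 s := mem_L2_iff.2 ⟨M, Nn, rfl⟩
      have hV1L1 : ((2*s*(M:ℝ), 2*(Nn:ℝ)+2*s*(M:ℝ)) : ℝ×ℝ) ∈ L1 s := by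
        have hneg : ((2*s*(M:ℝ), 2*(Nn:ℝ)+2*s*(M:ℝ)) : ℝ×ℝ)
            = -(((2*(N':ℝ) + 2*s*(M':ℝ), -(2*s*(M':ℝ))) : ℝ×ℝ)) := by
          ext
          · simp only [Prod.fst_neg]; linarith [f1]
          · simp only [Prod.snd_neg]; linarith [f2]
        rw [hneg]
        exact AddSubgroup.neg_mem _ (mem_L1_iff.2 ⟨M', N', rfl⟩)
      have hgap := gap hs4 hs1 h3 h2 hV1L1 hV1L2
        (by simp only; linarith) (by simp only; linarith)
        (by simp only; linarith) (by simp only; linarith)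
      have hM0 : M = 0 := by
        have := congrArg Prod.fst hgap
        simp only [Prod.fst_zero] at this
        exact int_cast_zero_of_mul hs0 (by linarith)
      subst hM0
      have hNn0 : Nn = 0 := by
        have := congrArg Prod.snd hgap
        simp only [Prod.snd_zero] at this
        push_cast at this
        exact_mod_cast (by linarith : (Nn:ℝ) = 0)
      subst hNn0
      push_cast at f1 f2 b1 b2 b3 b4 b5 b6 b7 b8
      have hM'0 : M' = 0 := int_cast_zero_of_mul hs0 (by linarith [f2])
      subst hM'0
      push_cast at f1 f2 b1 b2 b3 b4 b5 b6 b7 b8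
      have hN'0 : N' = 0 := by
        exact_mod_cast (by linarith [f1] : (N':ℝ) = 0)
      subst hN'0
      push_cast at b1 b2 b3 b4 b5 b6 b7 b8
      refine Or.inl ⟨0, 0, 0, 0, by push_cast; simp, by push_cast; simp,
        ?_, ?_, ?_, ?_, ?_, ?_, ?_, ?_⟩ <;> push_cast
      · linarith [comb_gt_r ha'.le hb' hab g1 b1]
      · linarith [comb_lt_r ha'.le hb' hab g2 b2]
      · linarith [comb_gt_r ha'.le hb' hab g3 b3]
      · linarith [comb_lt_r ha'.le hb' hab g4 b4]
      · linarith [comb_gt_l ha' hb'.le hab g5 b5.le]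
      · linarith [comb_lt_l ha' hb'.le hab g6 b6.le]
      · linarith [comb_gt_l ha' hb'.le hab g7 b7.le]
      · linarith [comb_lt_l ha' hb'.le hab g8 b8.le]
    · -- BB × AA : mirror of AA × BB
      simp only [Prod.fst_zero, Prod.snd_zero] at f1 f2
      have hM0 : M = 0 := int_cast_zero_of_mul hs0 (by linarith [f1])
      subst hM0
      push_cast at f1 f2 b1 b2 b3 b4 b5 b6 b7 b8
      have hNn0 : Nn = 0 := by
        exact_mod_cast (by linarith [f2] : (Nn:ℝ) = 0)
      subst hNn0
      push_cast at b3 b4 b5 b6 b7 b8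
      refine Or.inr (Or.inl ⟨0, 0, by simp, by simp, ?_, ?_, ?_, ?_, ?_, ?_, ?_, ?_⟩) <;>
        push_cast
      · linarith [comb_gt_r ha'.le hb' hab g1 b1]
      · linarith [comb_lt_r ha'.le hb' hab g2 b2]
      · linarith [comb_gt_r ha'.le hb' hab g3 b3]
      · linarith [comb_lt_r ha'.le hb' hab g4 b4]
      · linarith [comb_ge ha hb hab g5.le b5]
      · linarith [comb_le ha hb hab g6.le b6]
      · linarith [comb_ge ha hb hab g7.le b7]
      · linarith [comb_le ha hb hab g8.le b8]
    · -- BB × BA : mirror of BA × BB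
      simp only [Prod.fst_zero, Prod.snd_zero] at f1 f2
      have hM0 : M = 0 := int_cast_zero_of_mul hs0 (by linarith [f1])
      subst hM0
      push_cast at f1 f2 b1 b2 b3 b4
      have hNn0 : Nn = 0 := by
        exact_mod_cast (by linarith [f2] : (Nn:ℝ) = 0)
      subst hNn0
      push_cast at b3 b4
      refine Or.inr (Or.inr (Or.inl ⟨?_, ?_, ?_, ?_, ?_, ?_, ?_, ?_, 0, 0, by simp, by simp,
        ?_, ?_, ?_, ?_⟩)) <;> push_cast
      · linarith [comb_ge ha hb hab g1 k1]
      · linarith [comb_le ha hb hab g2 k2]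
      · linarith [comb_ge ha hb hab g3 k3]
      · linarith [comb_le ha hb hab g4 k4]
      · linarith [comb_gt_l ha' hb'.le hab g5 k5.le]
      · linarith [comb_lt_l ha' hb'.le hab g6 k6.le]
      · linarith [comb_gt_l ha' hb'.le hab g7 k7.le]
      · linarith [comb_lt_l ha' hb'.le hab g8 k8.le]
      · linarith [comb_gt_r ha'.le hb' hab g1 b1]
      · linarith [comb_lt_r ha'.le hb' hab g2 b2]
      · linarith [comb_gt_r ha'.le hb' hab g3 b3]
      · linarith [comb_lt_r ha'.le hb' hab g4 b4]
    · -- BB × BB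
      refine Or.inr (Or.inr (Or.inr ⟨rfl, ?_, ?_, ?_, ?_, ?_, ?_, ?_, ?_⟩))
      · linarith [comb_ge ha hb hab g1 k1]
      · linarith [comb_le ha hb hab g2 k2]
      · linarith [comb_ge ha hb hab g3 k3]
      · linarith [comb_le ha hb hab g4 k4]
      · linarith [comb_gt_l ha' hb'.le hab g5 k5.le]
      · linarith [comb_lt_l ha' hb'.le hab g6 k6.le]
      · linarith [comb_gt_l ha' hb'.le hab g7 k7.le]
      · linarith [comb_lt_l ha' hb'.le hab g8 k8.le]
end
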